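/- arXiv:cs/0510033 — 8 statements merged into one kernel-verified Lean document; each statement's English description precedes it below -/
import Mathlib

section
/- For every integer q ≥ 2, the capacity of the q-GP constraint equals the limit of the capacities of the q-GP(t) constraints: H_q = lim_{t→∞} H_q(t) = inf_{t≥1} H_q(t). (Proposition 2) -/
/-- The q-GP constraint (unbounded memory), positions 0-indexed. -/
def SatisfiesGP {q n : ℕ} (x : Fin n → Fin q) : Prop :=
  ∀ k l m : Fin n, (x k).val ≠ 0 → x k = x l → x l = x m →
    ∀ i : Fin n, ((i : ℕ) : ℤ) = ((k : ℕ) : ℤ) + ((l : ℕ) : ℤ) - ((m : ℕ) : ℤ) →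
      (x i).val ≠ 0

/-- The q-GP(t) constraint, positions 0-indexed. -/
def SatisfiesGPt {q : ℕ} (t : ℕ) {n : ℕ} (x : Fin n → Fin q) : Prop :=
  ∀ k l m : Fin n, (x k).val ≠ 0 → x k = x l → x l = x m →
    max (max |((k : ℕ) : ℤ) - ((l : ℕ) : ℤ)| |((l : ℕ) : ℤ) - ((m : ℕ) : ℤ)|)
        |((m : ℕ) : ℤ) - ((k : ℕ) : ℤ)| ≤ (t : ℤ) →
    ∀ i : Fin n, ((i : ℕ) : ℤ) = ((k : ℕ) : ℤ) + ((l : ℕ) : ℤ) - ((m : ℕ) : ℤ) →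
      (x i).val ≠ 0

/-- The componentwise "absolute value" map `ξ`. -/
def xiMap {q n : ℕ} (x : Fin n → Fin q) : Fin n → Fin 2 :=
  fun i => if (x i).val = 0 then 0 else 1

/-- `B q n = ξ(T_q(n))`. -/
def B (q n : ℕ) : Set (Fin n → Fin 2) :=
  {y | ∃ x : Fin n → Fin q, SatisfiesGP x ∧ y = xiMap x}

/-- `Bt q t n = ξ(T_{q;t}(n))`. -/
def Bt (q t n : ℕ) : Set (Fin n → Fin 2) :=
  {y | ∃ x : Fin n → Fin q, SatisfiesGPt t x ∧ y = xiMap x}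

lemma gp_implies_gpt {q t n : ℕ} {x : Fin n → Fin q} (h : SatisfiesGP x) :
    SatisfiesGPt t x :=
  fun k l m h1 h2 h3 _ i hi => h k l m h1 h2 h3 i hi

lemma gpt_implies_gp {q t n : ℕ} (hn : n ≤ t + 1) {x : Fin n → Fin q}
    (h : SatisfiesGPt t x) : SatisfiesGP x := by
  intro k l m h1 h2 h3 i hi
  refine h k l m h1 h2 h3 ?_ i hi
  have hk := k.isLt; have hl := l.isLt; have hm := m.isLt
  simp only [max_le_iff, abs_le]
  omega

lemma B_subset_Bt (q t n : ℕ) : B q n ⊆ Bt q t n := by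
  rintro y ⟨x, hx, rfl⟩; exact ⟨x, gp_implies_gpt hx, rfl⟩

lemma Bt_eq_B (q t n : ℕ) (hn : n ≤ t + 1) : Bt q t n = B q n := by
  apply Set.Subset.antisymm _ (B_subset_Bt q t n)
  rintro y ⟨x, hx, rfl⟩; exact ⟨x, gpt_implies_gp hn hx, rfl⟩

lemma Bt_nonempty (q t n : ℕ) (hq : 2 ≤ q) : (Bt q t n).Nonempty := by
  refine ⟨xiMap (fun _ => (⟨0, by omega⟩ : Fin q)), ⟨_, ?_, rfl⟩⟩
  intro k l m h1
  exact absurd rfl h1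

lemma gpt_prefix {q t n m : ℕ} {x : Fin (n + m) → Fin q} (h : SatisfiesGPt t x) :
    SatisfiesGPt t (fun i : Fin n => x (Fin.castAdd m i)) := by
  intro k l m' h1 h2 h3 hmax i hi
  exact h (Fin.castAdd m k) (Fin.castAdd m l) (Fin.castAdd m m') h1 h2 h3
    (by simpa using hmax) (Fin.castAdd m i) (by simpa using hi)

lemma gpt_suffix {q t n m : ℕ} {x : Fin (n + m) → Fin q} (h : SatisfiesGPt t x) :
    SatisfiesGPt t (fun j : Fin m => x (Fin.natAdd n j)) := by
  intro k l m' h1 h2 h3 hmax i hi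
  refine h (Fin.natAdd n k) (Fin.natAdd n l) (Fin.natAdd n m') h1 h2 h3 ?_ (Fin.natAdd n i) ?_
  · rw [max_le_iff, max_le_iff, abs_le, abs_le, abs_le] at hmax ⊢
    simp only [Fin.coe_natAdd]
    push_cast
    omega
  · simp only [Fin.coe_natAdd]
    push_cast
    omega

lemma card_Bt_add_le (q t n m : ℕ) :
    Nat.card ↥(Bt q t (n + m)) ≤ Nat.card ↥(Bt q t n) * Nat.card ↥(Bt q t m) := by
  classical
  rw [← Nat.card_prod]
  have hmem : ∀ y : ↥(Bt q t (n + m)),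
      ((fun i : Fin n => y.1 (Fin.castAdd m i)) ∈ Bt q t n) ∧
      ((fun j : Fin m => y.1 (Fin.natAdd n j)) ∈ Bt q t m) := by
    rintro ⟨y, x, hx, rfl⟩
    exact ⟨⟨_, gpt_prefix hx, rfl⟩, ⟨_, gpt_suffix hx, rfl⟩⟩
  apply Nat.card_le_card_of_injective
    (fun y : ↥(Bt q t (n + m)) =>
      ((⟨fun i => y.1 (Fin.castAdd m i), (hmem y).1⟩ : ↥(Bt q t n)),
       (⟨fun j => y.1 (Fin.natAdd n j), (hmem y).2⟩ : ↥(Bt q t m))))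
  rintro ⟨y₁, hy₁⟩ ⟨y₂, hy₂⟩ h
  simp only [Prod.mk.injEq, Subtype.mk.injEq] at h
  refine Subtype.ext (funext fun j => ?_)
  refine Fin.addCases (motive := fun j => y₁ j = y₂ j) ?_ ?_ j
  · exact fun i => congrFun h.1 i
  · exact fun i => congrFun h.2 i

lemma one_le_card_Bt (q t n : ℕ) (hq : 2 ≤ q) : 1 ≤ Nat.card ↥(Bt q t n) := by
  haveI := (Bt_nonempty q t n hq).to_subtype
  exact Nat.one_le_iff_ne_zero.mpr Nat.card_pos.ne'

lemma one_le_card_B (q n : ℕ) (hq : 2 ≤ q) : 1 ≤ Nat.card ↥(B q n) := by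
  rw [← Bt_eq_B q n n (by omega)]
  exact one_le_card_Bt q n n hq

lemma logb_subadd (q t : ℕ) (hq : 2 ≤ q) (n m : ℕ) :
    Real.logb 2 (Nat.card ↥(Bt q t (n + m))) ≤
      Real.logb 2 (Nat.card ↥(Bt q t n)) + Real.logb 2 (Nat.card ↥(Bt q t m)) := by
  have h1 := one_le_card_Bt q t n hq
  have h2 := one_le_card_Bt q t m hq
  have h3 := one_le_card_Bt q t (n + m) hq
  rw [← Real.logb_mul (by positivity) (by positivity), ← Nat.cast_mul]
  apply Real.logb_le_logb_of_le (by norm_num : (1:ℝ) < 2) (by positivity)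
  exact_mod_cast card_Bt_add_le q t n m

lemma logb_mul_le (q t : ℕ) (hq : 2 ≤ q) (n : ℕ) : ∀ k : ℕ,
    Real.logb 2 (Nat.card ↥(Bt q t (k * n))) ≤
      (k : ℝ) * Real.logb 2 (Nat.card ↥(Bt q t n)) := by
  intro k
  induction k with
  | zero =>
    simp only [Nat.zero_mul, Nat.cast_zero, zero_mul]
    have h1 := one_le_card_Bt q t 0 hq
    have h2 : Nat.card ↥(Bt q t 0) ≤ Nat.card (Fin 0 → Fin 2) :=
      Nat.card_le_card_of_injective _ Subtype.val_injective
    have h3 : Nat.card (Fin 0 → Fin 2) = 1 := by simp [Nat.card_eq_fintype_card]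
    have h4 : Nat.card ↥(Bt q t (0 * n)) = 1 := by
      rw [Nat.zero_mul]; omega
    simp [h4]
  | succ k ih =>
    have : (k + 1) * n = k * n + n := by ring
    rw [this]
    calc Real.logb 2 (Nat.card ↥(Bt q t (k * n + n)))
        ≤ Real.logb 2 (Nat.card ↥(Bt q t (k * n))) + Real.logb 2 (Nat.card ↥(Bt q t n)) :=
          logb_subadd q t hq (k * n) n
      _ ≤ (k : ℝ) * Real.logb 2 (Nat.card ↥(Bt q t n)) + Real.logb 2 (Nat.card ↥(Bt q t n)) := by
          linarith
      _ = ((k + 1 : ℕ) : ℝ) * Real.logb 2 (Nat.card ↥(Bt q t n)) := by push_cast; ring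

lemma Hq_le_Hqt (q : ℕ) (hq : 2 ≤ q) (Hq : ℝ) (Hqt : ℕ → ℝ)
    (hHq : Filter.Tendsto
      (fun n : ℕ => Real.logb 2 (Nat.card ↥(B q n)) / (n : ℝ))
      Filter.atTop (nhds Hq))
    (t : ℕ) (ht : 1 ≤ t)
    (hHqt : Filter.Tendsto
      (fun n : ℕ => Real.logb 2 (Nat.card ↥(Bt q t n)) / (n : ℝ))
      Filter.atTop (nhds (Hqt t))) : Hq ≤ Hqt t := by
  refine le_of_tendsto_of_tendsto hHq hHqt (Filter.Eventually.of_forall fun n => ?_)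
  have hcard : Nat.card ↥(B q n) ≤ Nat.card ↥(Bt q t n) :=
    Nat.card_mono (Set.toFinite _) (B_subset_Bt q t n)
  have h1 := one_le_card_B q n hq
  have hlog : Real.logb 2 (Nat.card ↥(B q n)) ≤ Real.logb 2 (Nat.card ↥(Bt q t n)) :=
    Real.logb_le_logb_of_le (by norm_num) (by positivity) (by exact_mod_cast hcard)
  exact div_le_div_of_nonneg_right hlog (by positivity)

lemma Hqt_le_term (q t : ℕ) (hq : 2 ≤ q) (L : ℝ)
    (hL : Filter.Tendsto
      (fun n : ℕ => Real.logb 2 (Nat.card ↥(Bt q t n)) / (n : ℝ))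
      Filter.atTop (nhds L)) (n : ℕ) (hn : 1 ≤ n) :
    L ≤ Real.logb 2 (Nat.card ↥(Bt q t n)) / (n : ℝ) := by
  have hcomp : Filter.Tendsto
      (fun k : ℕ => Real.logb 2 (Nat.card ↥(Bt q t (k * n))) / ((k * n : ℕ) : ℝ))
      Filter.atTop (nhds L) := by
    apply hL.comp
    apply Filter.tendsto_atTop_atTop.mpr
    exact fun b => ⟨b, fun c hc => le_trans hc (Nat.le_mul_of_pos_right c hn)⟩
  refine le_of_tendsto hcomp ?_
  filter_upwards [Filter.eventually_ge_atTop 1] with k hk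
  have hbound := logb_mul_le q t hq n k
  have hk0 : (k : ℝ) ≠ 0 := by positivity
  have hkn : (0 : ℝ) < ((k * n : ℕ) : ℝ) := by positivity
  calc Real.logb 2 (Nat.card ↥(Bt q t (k * n))) / ((k * n : ℕ) : ℝ)
      ≤ ((k : ℝ) * Real.logb 2 (Nat.card ↥(Bt q t n))) / ((k * n : ℕ) : ℝ) :=
        div_le_div_of_nonneg_right hbound hkn.le
    _ = Real.logb 2 (Nat.card ↥(Bt q t n)) / (n : ℝ) := by
        rw [Nat.cast_mul]
        exact mul_div_mul_left _ _ hk0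

/-- **Proposition 2.** For every `q ≥ 2`, if `Hq` is the capacity of the q-GP
constraint and `Hqt t` is the capacity of the q-GP(t) constraint for each `t ≥ 1`
(both defined as the limits of `(log₂|B(n)|)/n`, which exist), then
`H_q = lim_{t→∞} H_q(t) = inf_{t ≥ 1} H_q(t)`. -/
theorem capacity_eq_lim_eq_inf (q : ℕ) (hq : 2 ≤ q) (Hq : ℝ) (Hqt : ℕ → ℝ)
    (hHq : Filter.Tendsto
      (fun n : ℕ => Real.logb 2 (Nat.card ↥(B q n)) / (n : ℝ))
      Filter.atTop (nhds Hq))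
    (hHqt : ∀ t : ℕ, 1 ≤ t → Filter.Tendsto
      (fun n : ℕ => Real.logb 2 (Nat.card ↥(Bt q t n)) / (n : ℝ))
      Filter.atTop (nhds (Hqt t))) :
    Filter.Tendsto (fun t : ℕ => Hqt t) Filter.atTop (nhds Hq) ∧
    Hq = ⨅ t : {s : ℕ // 1 ≤ s}, Hqt t.1 := by
  have hle : ∀ t : ℕ, 1 ≤ t → Hq ≤ Hqt t := fun t ht =>
    Hq_le_Hqt q hq Hq Hqt hHq t ht (hHqt t ht)
  have hub : ∀ t : ℕ, 1 ≤ t →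
      Hqt t ≤ Real.logb 2 (Nat.card ↥(B q (t + 1))) / ((t + 1 : ℕ) : ℝ) := by
    intro t ht
    have h := Hqt_le_term q t hq (Hqt t) (hHqt t ht) (t + 1) (by omega)
    rwa [Bt_eq_B q t (t + 1) le_rfl] at h
  have hupper : Filter.Tendsto
      (fun t : ℕ => Real.logb 2 (Nat.card ↥(B q (t + 1))) / ((t + 1 : ℕ) : ℝ))
      Filter.atTop (nhds Hq) :=
    hHq.comp (Filter.tendsto_add_atTop_nat 1)
  have htend : Filter.Tendsto (fun t : ℕ => Hqt t) Filter.atTop (nhds Hq) := by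
    refine tendsto_of_tendsto_of_tendsto_of_le_of_le' tendsto_const_nhds hupper ?_ ?_
    · filter_upwards [Filter.eventually_ge_atTop 1] with t ht using hle t ht
    · filter_upwards [Filter.eventually_ge_atTop 1] with t ht using hub t ht
  refine ⟨htend, ?_⟩
  have hbdd : BddBelow (Set.range fun t : {s : ℕ // 1 ≤ s} => Hqt t.1) :=
    ⟨Hq, by rintro _ ⟨t, rfl⟩; exact hle t.1 t.2⟩
  refine le_antisymm (le_ciInf fun t => hle t.1 t.2) ?_
  refine ge_of_tendsto htend ?_
  filter_upwards [Filter.eventually_ge_atTop 1] with t ht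
  exact ciInf_le hbdd ⟨t, ht⟩
end

section
/- For every n ≥ 1, a binary sequence x = (x_1,…,x_n) ∈ {0,1}^n satisfies the BGP constraint if and only if there exist integers a, d ∈ [0, n] such that supp(x) = (a + dℤ) ∩ [n], i.e. the positions of the ones in x form an arithmetic progression. (Theorem 3) -/
/-- A binary sequence `x = (x_1, …, x_n)` (indexed here by `Fin n`, so position
`i : Fin n` corresponds to the paper's position `i + 1`) satisfies the binary
ghost-pulse (BGP) constraint: for all positions `k, l, m` in the support of `x`
(not necessarily distinct), if the integer `k + l - m` is a valid position then it
also lies in the support of `x`. -/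
def SatisfiesBGP {n : ℕ} (x : Fin n → Fin 2) : Prop :=
  ∀ k l m : Fin n, (x k).val ≠ 0 → (x l).val ≠ 0 → (x m).val ≠ 0 →
    ∀ i : Fin n, ((i : ℕ) : ℤ) = ((k : ℕ) : ℤ) + ((l : ℕ) : ℤ) - ((m : ℕ) : ℤ) →
      (x i).val ≠ 0

/-- **Theorem 3.** For `n ≥ 1`, a binary sequence `x ∈ {0,1}ⁿ` satisfies the BGP
constraint if and only if there exist `a, d ∈ [0, n]` such that
`supp(x) = (a + dℤ) ∩ [n]`: the (1-indexed) position `i + 1` of `x` is in the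
support iff `i + 1 = a + d·j` for some integer `j`. -/
theorem bgp_iff_arithmetic_progression (n : ℕ) (hn : 1 ≤ n) (x : Fin n → Fin 2) :
    SatisfiesBGP x ↔
      ∃ a d : ℕ, a ≤ n ∧ d ≤ n ∧
        ∀ i : Fin n,
          ((x i).val ≠ 0 ↔ ∃ j : ℤ, ((i : ℕ) : ℤ) + 1 = (a : ℤ) + (d : ℤ) * j) := by
  constructor
  · intro hB
    by_cases hne : ∃ i : Fin n, (x i).val ≠ 0
    · -- nonempty support
      set T : Finset ℕ :=
        (Finset.univ.filter (fun i => (x i).val ≠ 0)).image (fun i : Fin n => (i : ℕ) + 1)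
        with hT
      have hmemT : ∀ s, s ∈ T ↔ ∃ i : Fin n, (x i).val ≠ 0 ∧ (i : ℕ) + 1 = s := by
        intro s
        simp [hT]
      have hTle : ∀ s ∈ T, 1 ≤ s ∧ s ≤ n := by
        intro s hs
        obtain ⟨i, _, hi2⟩ := (hmemT s).mp hs
        have := i.isLt
        omega
      have hcl : ∀ p q r s : ℕ, p ∈ T → q ∈ T → r ∈ T → 1 ≤ s → s ≤ n →
          (s : ℤ) = (p : ℤ) + q - r → s ∈ T := by
        intro p q r s hp hq hr hs1 hsn heq
        obtain ⟨ip, hip, hip2⟩ := (hmemT p).mp hp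
        obtain ⟨iq, hiq, hiq2⟩ := (hmemT q).mp hq
        obtain ⟨ir, hir, hir2⟩ := (hmemT r).mp hr
        have hi := hB ip iq ir hip hiq hir ⟨s - 1, by omega⟩ (by push_cast; omega)
        exact (hmemT s).mpr ⟨⟨s - 1, by omega⟩, hi, by simp; omega⟩
      obtain ⟨i0, hi0⟩ := hne
      have hTne : T.Nonempty := ⟨(i0 : ℕ) + 1, (hmemT _).mpr ⟨i0, hi0, rfl⟩⟩
      set a := T.min' hTne with ha
      have haT : a ∈ T := T.min'_mem hTne
      have hamin : ∀ s ∈ T, a ≤ s := fun s hs => T.min'_le s hs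
      have ha1 : 1 ≤ a := (hTle a haT).1
      have han : a ≤ n := (hTle a haT).2
      by_cases h2 : (T.erase a).Nonempty
      · -- at least two elements
        set b := (T.erase a).min' h2 with hb
        have hbE : b ∈ T.erase a := (T.erase a).min'_mem h2
        have hbT : b ∈ T := Finset.mem_of_mem_erase hbE
        have hbne : b ≠ a := (Finset.mem_erase.mp hbE).1
        have hab : a < b := lt_of_le_of_ne (hamin b hbT) (Ne.symm hbne)
        have hbn : b ≤ n := (hTle b hbT).2
        have hbmin : ∀ s ∈ T, s ≠ a → b ≤ s := fun s hs h =>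
          (T.erase a).min'_le s (Finset.mem_erase.mpr ⟨h, hs⟩)
        set d := b - a with hd
        have hd1 : 1 ≤ d := by omega
        have hbad : b = a + d := by omega
        -- a ≤ d, else a - d would be in T, contradicting minimality of a
        have had : a ≤ d := by
          by_contra h
          push_neg at h
          have hs : a - d ∈ T :=
            hcl a a b (a - d) haT haT hbT (by omega) (by omega) (by push_cast; omega)
          have := hamin _ hs
          omega
        -- upward closure: all a + j*d ≤ n are in T
        have hup : ∀ j : ℕ, a + j * d ≤ n → a + j * d ∈ T := by
          intro j
          induction j with
          | zero => intro _; simpa using haT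
          | succ j ih =>
            intro hle
            have ht : (j + 1) * d = j * d + d := by ring
            have h1 : a + j * d ≤ n := by omega
            have hprev := ih h1
            refine hcl (a + j * d) b a (a + (j + 1) * d) hprev hbT haT (by omega) hle ?_
            push_cast
            have hbz : (b : ℤ) = (a : ℤ) + d := by exact_mod_cast hbad
            linear_combination -hbz
        -- downward: every element of T is of the form a + j*d
        have hdown : ∀ s, s ∈ T → ∃ j : ℕ, s = a + j * d := by
          intro s
          induction s using Nat.strong_induction_on with
          | _ s ih =>
            intro hs
            by_cases hsa : s = a
            · exact ⟨0, by omega⟩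
            · have hbs : b ≤ s := hbmin s hs hsa
              have hsn : s ≤ n := (hTle s hs).2
              have hmem : s - d ∈ T :=
                hcl s a b (s - d) hs haT hbT (by omega) (by omega) (by push_cast; omega)
              obtain ⟨j, hj⟩ := ih (s - d) (by omega) hmem
              refine ⟨j + 1, ?_⟩
              have ht : (j + 1) * d = j * d + d := by ring
              omega
        refine ⟨a, d, han, by omega, fun i => ?_⟩
        constructor
        · intro h
          have hs : (i : ℕ) + 1 ∈ T := (hmemT _).mpr ⟨i, h, rfl⟩
          obtain ⟨j, hj⟩ := hdown _ hs
          exact ⟨(j : ℤ), by rw [mul_comm]; exact_mod_cast hj⟩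
        · rintro ⟨j, hj⟩
          have hj0 : 0 ≤ j := by
            by_contra h
            push_neg at h
            have hj1 : (j : ℤ) ≤ -1 := by omega
            have hdpos : (0 : ℤ) < (d : ℤ) := by exact_mod_cast hd1
            have hdj : (d : ℤ) * j ≤ -(d : ℤ) := by nlinarith
            have hi0 : (0 : ℤ) ≤ ((i : ℕ) : ℤ) := Int.natCast_nonneg _
            have had' : (a : ℤ) ≤ (d : ℤ) := by exact_mod_cast had
            linarith
          obtain ⟨jn, rfl⟩ := Int.eq_ofNat_of_zero_le hj0
          have hnat : (i : ℕ) + 1 = a + jn * d := by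
            have : ((i : ℕ) : ℤ) + 1 = ((a : ℕ) : ℤ) + (jn : ℤ) * d := by
              rw [hj]; ring
            exact_mod_cast this
          obtain ⟨t, ht⟩ : ∃ t, jn * d = t := ⟨_, rfl⟩
          rw [ht] at hnat
          have hle : a + jn * d ≤ n := by
            rw [ht]
            have := i.isLt
            omega
          have hmem := hup jn hle
          rw [ht] at hmem
          obtain ⟨i', hi', hi'2⟩ := (hmemT _).mp hmem
          have hii : i' = i := Fin.ext (by omega)
          rwa [← hii]
      · -- T = {a}
        have hTsub : ∀ s ∈ T, s = a := by
          intro s hs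
          by_contra h
          exact h2 ⟨s, Finset.mem_erase.mpr ⟨h, hs⟩⟩
        refine ⟨a, 0, han, Nat.zero_le n, fun i => ?_⟩
        constructor
        · intro h
          have hs : (i : ℕ) + 1 ∈ T := (hmemT _).mpr ⟨i, h, rfl⟩
          have := hTsub _ hs
          exact ⟨0, by push_cast; omega⟩
        · rintro ⟨j, hj⟩
          have hja : (i : ℕ) + 1 = a := by
            have : ((i : ℕ) : ℤ) + 1 = (a : ℤ) := by simpa using hj
            exact_mod_cast this
          obtain ⟨i', hi', hi'2⟩ := (hmemT a).mp haT
          have hii : i' = i := Fin.ext (by omega)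
          rwa [← hii]
    · -- empty support: a = 0, d = 0
      push_neg at hne
      refine ⟨0, 0, Nat.zero_le n, Nat.zero_le n, fun i => ?_⟩
      constructor
      · intro h
        exact absurd (hne i) h
      · rintro ⟨j, hj⟩
        exfalso
        have hi0 : (0 : ℤ) ≤ ((i : ℕ) : ℤ) := Int.natCast_nonneg _
        simp at hj
        omega
  · rintro ⟨a, d, han, hdn, h⟩
    intro k l m hk hl hm i hi
    obtain ⟨j1, h1⟩ := (h k).mp hk
    obtain ⟨j2, h2⟩ := (h l).mp hl
    obtain ⟨j3, h3⟩ := (h m).mp hm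
    exact (h i).mpr ⟨j1 + j2 - j3, by push_cast; linear_combination hi + h1 + h2 - h3⟩
end

section
/- For every n ≥ 1, there are at most (n+1)² binary sequences of length n satisfying the BGP constraint, i.e. |B_2(n)| ≤ (n+1)²; consequently the capacity of the BGP constraint is zero: H_BGP = lim_{n→∞} (log₂|B_2(n)|)/n = 0. (Corollary 4) -/
/-- The set of binary sequences of length `n` satisfying the BGP constraint. -/
def B2 (n : ℕ) : Set (Fin n → Fin 2) := {x | SatisfiesBGP x}

def suppF {n : ℕ} (x : Fin n → Fin 2) : Finset (Fin n) :=
  Finset.univ.filter fun i => (x i).val ≠ 0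

lemma mem_suppF {n : ℕ} {x : Fin n → Fin 2} {i : Fin n} :
    i ∈ suppF x ↔ (x i).val ≠ 0 := by simp [suppF]

lemma bgpClosure {n : ℕ} {x : Fin n → Fin 2} (hx : SatisfiesBGP x) {k l m : Fin n}
    (hk : k ∈ suppF x) (hl : l ∈ suppF x) (hm : m ∈ suppF x)
    {j : ℕ} (hj : j < n) (heq : m.val + j = k.val + l.val) :
    (⟨j, hj⟩ : Fin n) ∈ suppF x := by
  rw [mem_suppF] at *
  exact hx k l m hk hl hm ⟨j, hj⟩ (by push_cast; omega)

/-- Characterization of the support when it has at least two elements. -/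
lemma supp_char {n : ℕ} {x : Fin n → Fin 2} (hx : SatisfiesBGP x) {a s : Fin n}
    (ha : a ∈ suppF x) (hmin : ∀ i ∈ suppF x, a ≤ i)
    (hs : s ∈ suppF x) (hsa : a < s) (hmin2 : ∀ i ∈ suppF x, i ≠ a → s ≤ i) :
    ∀ i : Fin n, i ∈ suppF x ↔ (a.val ≤ i.val ∧ (s.val - a.val) ∣ (i.val - a.val)) := by
  set d := s.val - a.val with hd
  have hdpos : 0 < d := by omega
  -- forward direction, by strong induction on the value
  have fwd : ∀ v : ℕ, ∀ hv : v < n, (⟨v, hv⟩ : Fin n) ∈ suppF x →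
      a.val ≤ v ∧ d ∣ (v - a.val) := by
    intro v
    induction v using Nat.strong_induction_on with
    | _ v ih =>
      intro hv hmem
      have hav : a.val ≤ v := hmin _ hmem
      rcases eq_or_lt_of_le hav with heq | hlt
      · exact ⟨hav, by simp [← heq]⟩
      · have hsv : s.val ≤ v := by
          have := hmin2 _ hmem (by intro h; have := congrArg Fin.val h; simp at this; omega)
          exact this
        -- v - d ∈ supp : k = v, l = a, m = s ; s.val + (v - d) = v + a.val
        have hvd : v - d < n := by omega
        have hmem' : (⟨v - d, hvd⟩ : Fin n) ∈ suppF x :=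
          bgpClosure hx hmem ha hs hvd (by simp; omega)
        have := ih (v - d) (by omega) hvd hmem'
        refine ⟨hav, ?_⟩
        have h2 : d ∣ (v - d - a.val) := this.2
        have h3 : v - a.val = (v - d - a.val) + d := by omega
        rw [h3]
        exact Nat.dvd_add h2 dvd_rfl
  -- backward direction, by induction on the multiplier
  have bwd : ∀ j : ℕ, ∀ hv : a.val + d * j < n,
      (⟨a.val + d * j, hv⟩ : Fin n) ∈ suppF x := by
    intro j
    induction j with
    | zero => intro hv; simpa using ha
    | succ j ih =>
      intro hv
      have hv' : a.val + d * j < n := by nlinarith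
      have hmem := ih hv'
      -- k = a + j*d, l = s, m = a ; a.val + (a + (j+1)d) = (a + j*d) + s
      have := bgpClosure hx hmem hs ha hv (by simp only [Fin.val_mk, Nat.mul_succ]; omega)
      convert this using 2
  intro i
  constructor
  · intro hi
    exact fwd i.val i.isLt (by simpa using hi)
  · rintro ⟨hai, ⟨j, hj⟩⟩
    have hvi : a.val + d * j < n := by omega
    have := bwd j hvi
    have : (⟨a.val + d * j, hvi⟩ : Fin n) = i := by
      apply Fin.ext; simp; omega
    rwa [← this]
    

noncomputable def enc {n : ℕ} (x : Fin n → Fin 2) : ℕ × ℕ :=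
  if h : (suppF x).Nonempty then
    if h2 : ((suppF x).erase ((suppF x).min' h)).Nonempty then
      (((suppF x).min' h).val, (((suppF x).erase ((suppF x).min' h)).min' h2).val)
    else (((suppF x).min' h).val, n)
  else (n, n)

lemma enc_le {n : ℕ} (x : Fin n → Fin 2) : (enc x).1 ≤ n ∧ (enc x).2 ≤ n := by
  unfold enc
  by_cases h : (suppF x).Nonempty
  · by_cases h2 : ((suppF x).erase ((suppF x).min' h)).Nonempty <;>
      simp [h, h2, Fin.is_le, le_of_lt (Fin.isLt _)]
  · simp [h]

lemma eq_of_suppF_eq {n : ℕ} {x y : Fin n → Fin 2} (h : suppF x = suppF y) : x = y := by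
  funext i
  have hi := Finset.ext_iff.mp h i
  simp only [mem_suppF] at hi
  have h1 := (x i).isLt
  have h2 := (y i).isLt
  exact Fin.ext (by omega)

lemma suppF_eq_of_enc_eq {n : ℕ} {x y : Fin n → Fin 2} (hx : SatisfiesBGP x)
    (hy : SatisfiesBGP y) (h : enc x = enc y) : suppF x = suppF y := by
  by_cases hnx : (suppF x).Nonempty
  · by_cases hny : (suppF y).Nonempty
    · -- both nonempty
      set ax := (suppF x).min' hnx with hax
      set ay := (suppF y).min' hny with hay
      have haxy : ax = ay := by
        apply Fin.ext
        have h1 := congrArg Prod.fst h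
        unfold enc at h1
        rw [dif_pos hnx, dif_pos hny] at h1
        by_cases h2x : ((suppF x).erase ax).Nonempty <;>
          by_cases h2y : ((suppF y).erase ay).Nonempty <;>
          simp only [h2x, h2y, ← hax, ← hay, dif_pos, dif_neg, not_false_iff] at h1 <;>
          exact h1
      by_cases h2x : ((suppF x).erase ax).Nonempty
      · by_cases h2y : ((suppF y).erase ay).Nonempty
        · -- both have ≥ 2 elements
          set sx := ((suppF x).erase ax).min' h2x with hsx
          set sy := ((suppF y).erase ay).min' h2y with hsy
          have hsxy : sx = sy := by
            apply Fin.ext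
            unfold enc at h
            rw [dif_pos hnx, dif_pos hny, dif_pos h2x, dif_pos h2y] at h
            have h2 := congrArg Prod.snd h
            simpa [← hax, ← hay, ← hsx, ← hsy] using h2
          have hsx_mem : sx ∈ suppF x := Finset.mem_of_mem_erase (Finset.min'_mem _ h2x)
          have hsy_mem : sy ∈ suppF y := Finset.mem_of_mem_erase (Finset.min'_mem _ h2y)
          have hax_lt : ax < sx := by
            have h1 : ax ≤ sx := Finset.min'_le _ _ hsx_mem
            have h2 : sx ≠ ax := (Finset.mem_erase.mp (Finset.min'_mem _ h2x)).1
            exact lt_of_le_of_ne h1 (Ne.symm h2)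
          have hay_lt : ay < sy := by
            have h1 : ay ≤ sy := Finset.min'_le _ _ hsy_mem
            have h2 : sy ≠ ay := (Finset.mem_erase.mp (Finset.min'_mem _ h2y)).1
            exact lt_of_le_of_ne h1 (Ne.symm h2)
          have cx := supp_char hx (Finset.min'_mem _ hnx) (fun i hi => Finset.min'_le _ _ hi)
            hsx_mem hax_lt (fun i hi hne => Finset.min'_le _ _ (Finset.mem_erase.mpr ⟨hne, hi⟩))
          have cy := supp_char hy (Finset.min'_mem _ hny) (fun i hi => Finset.min'_le _ _ hi)
            hsy_mem hay_lt (fun i hi hne => Finset.min'_le _ _ (Finset.mem_erase.mpr ⟨hne, hi⟩))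
          ext i
          rw [cx i, cy i, ← hax, ← hay, haxy, hsxy]
        · -- x has ≥2, y singleton: contradiction via second component
          exfalso
          unfold enc at h
          rw [dif_pos hnx, dif_pos hny, dif_pos h2x, dif_neg h2y] at h
          have := (((suppF x).erase ax).min' h2x).isLt
          have h2 := congrArg Prod.snd h
          simp [← hax, ← hay] at h2
          omega
      · by_cases h2y : ((suppF y).erase ay).Nonempty
        · exfalso
          unfold enc at h
          rw [dif_pos hnx, dif_pos hny, dif_neg h2x, dif_pos h2y] at h
          have := (((suppF y).erase ay).min' h2y).isLt
          have h2 := congrArg Prod.snd h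
          simp [← hax, ← hay] at h2
          omega
        · -- both singletons
          rw [Finset.not_nonempty_iff_eq_empty, Finset.erase_eq_empty_iff] at h2x h2y
          rcases h2x with h2x | h2x
          · exact absurd h2x (Finset.nonempty_iff_ne_empty.mp hnx)
          rcases h2y with h2y | h2y
          · exact absurd h2y (Finset.nonempty_iff_ne_empty.mp hny)
          rw [h2x, h2y, haxy]
    · exfalso
      unfold enc at h
      rw [dif_pos hnx, dif_neg hny] at h
      have h1 := congrArg Prod.fst h
      by_cases h2x : ((suppF x).erase ((suppF x).min' hnx)).Nonempty <;>
        simp [h2x] at h1 <;>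
        exact absurd h1 (Nat.ne_of_lt (Fin.isLt _))
  · by_cases hny : (suppF y).Nonempty
    · exfalso
      unfold enc at h
      rw [dif_neg hnx, dif_pos hny] at h
      have h1 := congrArg Prod.fst h
      by_cases h2y : ((suppF y).erase ((suppF y).min' hny)).Nonempty <;>
        simp [h2y] at h1 <;>
        exact absurd h1.symm (Nat.ne_of_lt (Fin.isLt _))
    · rw [Finset.not_nonempty_iff_eq_empty] at hnx hny
      rw [hnx, hny]

lemma b2_card_le (n : ℕ) : Nat.card ↥(B2 n) ≤ (n + 1) ^ 2 := by
  set f : ↥(B2 n) → Fin (n+1) × Fin (n+1) := fun z =>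
    (⟨(enc z.1).1, Nat.lt_succ_of_le (enc_le z.1).1⟩,
     ⟨(enc z.1).2, Nat.lt_succ_of_le (enc_le z.1).2⟩) with hf
  have hinj : Function.Injective f := by
    intro z w hzw
    have h1 := congrArg (fun p => (p.1 : Fin (n+1)).val) hzw
    have h2 := congrArg (fun p => (p.2 : Fin (n+1)).val) hzw
    simp [hf] at h1 h2
    have henc : enc z.1 = enc w.1 := Prod.ext h1 h2
    exact Subtype.ext (eq_of_suppF_eq (suppF_eq_of_enc_eq z.2 w.2 henc))
  calc Nat.card ↥(B2 n) ≤ Nat.card (Fin (n+1) × Fin (n+1)) :=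
        Nat.card_le_card_of_injective f hinj
    _ = (n + 1) ^ 2 := by simp [Nat.card_eq_fintype_card]; ring

lemma b2_card_pos (n : ℕ) : 0 < Nat.card ↥(B2 n) := by
  haveI : Nonempty ↥(B2 n) :=
    ⟨⟨fun _ => 0, fun k l m hk => absurd rfl hk⟩⟩
  exact Nat.card_pos

/-- **Corollary 4.** For every `n ≥ 1` there are at most `(n+1)²` binary sequences
of length `n` satisfying the BGP constraint, and consequently the capacity of the
BGP constraint is zero: `lim_{n→∞} (log₂|B_2(n)|)/n = 0`. -/
theorem bgp_capacity_zero :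
    (∀ n : ℕ, 1 ≤ n → Nat.card ↥(B2 n) ≤ (n + 1) ^ 2) ∧
    Filter.Tendsto (fun n : ℕ => Real.logb 2 (Nat.card ↥(B2 n)) / (n : ℝ))
      Filter.atTop (nhds 0) := by
  refine ⟨fun n _ => b2_card_le n, ?_⟩
  have hnonneg : ∀ n : ℕ, 0 ≤ Real.logb 2 (Nat.card ↥(B2 n)) / (n : ℝ) := by
    intro n
    apply div_nonneg _ (Nat.cast_nonneg n)
    apply Real.logb_nonneg one_lt_two
    exact_mod_cast b2_card_pos n
  have hub : ∀ n : ℕ, Real.logb 2 (Nat.card ↥(B2 n)) / (n : ℝ) ≤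
      2 * Real.logb 2 ((n : ℝ) + 1) / (n : ℝ) := by
    intro n
    rcases Nat.eq_zero_or_pos n with rfl | hn
    · simp
    have hn' : (0 : ℝ) < n := by exact_mod_cast hn
    rw [div_le_div_iff_of_pos_right hn']
    have h1 : Real.logb 2 (Nat.card ↥(B2 n)) ≤ Real.logb 2 (((n : ℝ) + 1) ^ 2) := by
      apply Real.logb_le_logb_of_le one_lt_two (by exact_mod_cast b2_card_pos n)
      have := b2_card_le n
      exact_mod_cast this
    rw [Real.logb_pow] at h1
    push_cast at h1
    linarith
  have t1 : Filter.Tendsto (fun x : ℝ => Real.log x / x) Filter.atTop (nhds 0) :=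
    Real.isLittleO_log_id_atTop.tendsto_div_nhds_zero
  have t2 : Filter.Tendsto (fun n : ℕ => (n : ℝ) + 1) Filter.atTop Filter.atTop :=
    Filter.tendsto_atTop_add_const_right _ 1 tendsto_natCast_atTop_atTop
  have t3 := t1.comp t2
  have tinv : Filter.Tendsto (fun n : ℕ => ((n : ℝ))⁻¹) Filter.atTop (nhds 0) :=
    tendsto_inv_atTop_zero.comp tendsto_natCast_atTop_atTop
  have t4 : Filter.Tendsto (fun n : ℕ => ((n : ℝ) + 1) / (n : ℝ)) Filter.atTop (nhds 1) := by
    have h := (tendsto_const_nhds : Filter.Tendsto (fun _ : ℕ => (1:ℝ)) Filter.atTop (nhds 1)).add tinv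
    rw [add_zero] at h
    apply h.congr'
    filter_upwards [Filter.eventually_ge_atTop 1] with n hn
    have hn' : (0 : ℝ) < n := by exact_mod_cast hn
    field_simp
  have t6 := ((t3.mul t4).const_mul (2 / Real.log 2))
  rw [mul_one, mul_zero] at t6
  have t5 : Filter.Tendsto (fun n : ℕ => 2 * Real.logb 2 ((n : ℝ) + 1) / (n : ℝ))
      Filter.atTop (nhds 0) := by
    apply t6.congr'
    filter_upwards [Filter.eventually_ge_atTop 1] with n hn
    have hn' : (0 : ℝ) < n := by exact_mod_cast hn
    have hlog2 : Real.log 2 ≠ 0 := by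
      have := Real.log_pos one_lt_two; linarith
    simp only [Function.comp, Real.logb]
    field_simp
  exact squeeze_zero hnonneg hub t5
end

section
/- For every n ≥ 1, the number of binary sequences of length n satisfying the BGP constraint is exactly |B_2(n)| = (n+2)²/4 if n is even, and |B_2(n)| = (n+1)(n+3)/4 if n is odd. (Equation (26) of the paper) -/
namespace BGPaux

/-- indicator of the residue class `p.1` mod `p.2` -/
def g (n : ℕ) (p : ℕ × ℕ) : Fin n → Fin 2 := fun i => if (i : ℕ) % p.2 = p.1 then 1 else 0

def Pfin (n : ℕ) : Finset (ℕ × ℕ) :=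
  (Finset.range n ×ˢ Finset.range (n+1)).filter fun p => p.1 < p.2 ∧ (p.1 + p.2 < n ∨ p.2 = n)

lemma mem_Pfin {n a d : ℕ} :
    (a, d) ∈ Pfin n ↔ a < n ∧ d < n + 1 ∧ a < d ∧ (a + d < n ∨ d = n) := by
  simp [Pfin, Finset.mem_filter, Finset.mem_product, and_assoc]

lemma fin2_ne {y : Fin 2} (h : y.val ≠ 0) : y = 1 := by
  revert h; revert y; decide

lemma g_apply_ne {n a d : ℕ} {i : Fin n} (h : (g n (a, d) i).val ≠ 0) : (i : ℕ) % d = a := by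
  by_contra hc
  simp [g, hc] at h

lemma g_apply_eq {n a d : ℕ} {i : Fin n} (h : (i : ℕ) % d = a) : g n (a, d) i = 1 := by
  simp [g, h]

lemma g_bgp {n a d : ℕ} (had : a < d) : SatisfiesBGP (g n (a, d)) := by
  intro k l m hk hl hm i hi
  have hgk := g_apply_ne hk
  have hgl := g_apply_ne hl
  have hgm := g_apply_ne hm
  obtain ⟨k', hk'⟩ : ∃ q, (k : ℕ) = a + d * q := by
    have h2 := Nat.div_add_mod (k : ℕ) d; exact ⟨(k : ℕ) / d, by omega⟩
  obtain ⟨l', hl'⟩ : ∃ q, (l : ℕ) = a + d * q := by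
    have h2 := Nat.div_add_mod (l : ℕ) d; exact ⟨(l : ℕ) / d, by omega⟩
  obtain ⟨m', hm'⟩ : ∃ q, (m : ℕ) = a + d * q := by
    have h2 := Nat.div_add_mod (m : ℕ) d; exact ⟨(m : ℕ) / d, by omega⟩
  have key : ((i : ℕ) : ℤ) = (a : ℤ) + (d : ℤ) * ((k' : ℤ) + (l' : ℤ) - (m' : ℤ)) := by
    rw [hi]; push_cast [hk', hl', hm']; ring
  set t : ℤ := (k' : ℤ) + (l' : ℤ) - (m' : ℤ) with ht
  have htnn : 0 ≤ t := by
    by_contra hneg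
    push_neg at hneg
    have h1 : (d : ℤ) * t ≤ (d : ℤ) * (-1) := by
      apply mul_le_mul_of_nonneg_left (by omega) (by positivity)
    have h0 : (0 : ℤ) ≤ ((i : ℕ) : ℤ) := Int.natCast_nonneg _
    have hadz : (a : ℤ) < (d : ℤ) := by exact_mod_cast had
    omega
  obtain ⟨s, hs⟩ := Int.eq_ofNat_of_zero_le htnn
  have hival : (i : ℕ) = a + d * s := by
    have : ((i : ℕ) : ℤ) = ((a + d * s : ℕ) : ℤ) := by rw [key, hs]; push_cast; ring
    exact_mod_cast this
  have : (i : ℕ) % d = a := by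
    rw [hival, Nat.add_mul_mod_self_left, Nat.mod_eq_of_lt had]
  simp [g, this]

/-- zero sequence satisfies BGP -/
lemma zero_bgp (n : ℕ) : SatisfiesBGP (fun _ : Fin n => (0 : Fin 2)) := by
  intro k l m hk _ _ _ _
  simp at hk

/-- the full forward direction: every BGP sequence is zero or some `g`. -/
lemma bgp_structure {n : ℕ} (x : Fin n → Fin 2) (hx : SatisfiesBGP x) :
    x = (fun _ => 0) ∨ ∃ p ∈ Pfin n, g n p = x := by
  by_cases hz : ∀ i, (x i).val = 0
  · left; funext i; exact Fin.ext (hz i)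
  push_neg at hz
  right
  have hSne : (Finset.univ.filter (fun i : Fin n => (x i).val ≠ 0)).Nonempty := by
    obtain ⟨i, hi⟩ := hz; exact ⟨i, by simp only [Finset.mem_filter, Finset.mem_univ, true_and]; exact hi⟩
  set S := Finset.univ.filter (fun i : Fin n => (x i).val ≠ 0) with hSdef
  have memS : ∀ i : Fin n, i ∈ S ↔ (x i).val ≠ 0 := by intro i; simp [hSdef]
  set a := S.min' hSne with hadef
  have haS : (x a).val ≠ 0 := (memS a).1 (S.min'_mem hSne)
  have hamin : ∀ i : Fin n, (x i).val ≠ 0 → (a : ℕ) ≤ (i : ℕ) := by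
    intro i hi; exact S.min'_le i ((memS i).2 hi)
  have han : (a : ℕ) < n := a.isLt
  by_cases hsingle : ∀ i : Fin n, (x i).val ≠ 0 → i = a
  · -- singleton support: x = g n (a, n)
    refine ⟨((a : ℕ), n), ?_, ?_⟩
    · rw [mem_Pfin]; exact ⟨han, by omega, han, Or.inr rfl⟩
    · funext i
      have hmod : (i : ℕ) % n = (i : ℕ) := Nat.mod_eq_of_lt i.isLt
      by_cases hi : (x i).val ≠ 0
      · have : i = a := hsingle i hi
        subst this
        rw [g_apply_eq (by rw [hmod]), fin2_ne hi]
      · push_neg at hi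
        have hne : (i : ℕ) ≠ (a : ℕ) := by
          intro h
          have : i = a := Fin.ext h
          subst this
          exact haS hi
        have : g n ((a : ℕ), n) i = 0 := by simp [g, hmod, hne]
        rw [this]; exact (Fin.ext hi).symm
  · push_neg at hsingle
    obtain ⟨b, hbx, hba⟩ := hsingle
    have hbS' : b ∈ S.erase a := Finset.mem_erase.2 ⟨hba, (memS b).2 hbx⟩
    have hS'ne : (S.erase a).Nonempty := ⟨b, hbS'⟩
    obtain ⟨s1, hs1mem, hs1le⟩ := Finset.exists_min_image (S.erase a) id hS'ne
    simp only [id] at hs1le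
    have hs1a : s1 ≠ a := (Finset.mem_erase.1 hs1mem).1
    have hs1x : (x s1).val ≠ 0 := (memS s1).1 (Finset.mem_erase.1 hs1mem).2
    have hs1min : ∀ i : Fin n, (x i).val ≠ 0 → i ≠ a → (s1 : ℕ) ≤ (i : ℕ) := by
      intro i hi hia
      exact hs1le i (Finset.mem_erase.2 ⟨hia, (memS i).2 hi⟩)
    have has1 : (a : ℕ) < (s1 : ℕ) := by
      have h1 := hamin s1 hs1x
      have h2 : (a : ℕ) ≠ (s1 : ℕ) := fun h => hs1a (Fin.ext h.symm)
      omega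
    obtain ⟨d, hd, hdpos⟩ : ∃ d, (s1 : ℕ) = (a : ℕ) + d ∧ 0 < d :=
      ⟨(s1 : ℕ) - (a : ℕ), by omega, by omega⟩
    have hs1n : (s1 : ℕ) < n := s1.isLt
    -- claim 1 : a < d
    have had : (a : ℕ) < d := by
      by_contra hc
      push_neg at hc
      have hv : 2 * (a : ℕ) - (s1 : ℕ) < n := by omega
      have := hx a a s1 haS haS hs1x ⟨2 * (a : ℕ) - (s1 : ℕ), hv⟩
        (by simp only [Fin.val_mk]; push_cast; omega)
      have hle := hamin _ this
      simp only [Fin.val_mk] at hle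
      omega
    -- step down
    have down : ∀ s : Fin n, (x s).val ≠ 0 → (a : ℕ) < (s : ℕ) →
        (x ⟨(s : ℕ) - d, by omega⟩).val ≠ 0 := by
      intro s hs hlt
      have hge : (s1 : ℕ) ≤ (s : ℕ) := hs1min s hs (fun h => by subst h; omega)
      exact hx s a s1 hs haS hs1x ⟨(s : ℕ) - d, by omega⟩
        (by simp only [Fin.val_mk]; push_cast; omega)
    -- step up
    have up : ∀ s : Fin n, (x s).val ≠ 0 → ∀ hlt : (s : ℕ) + d < n,
        (x ⟨(s : ℕ) + d, hlt⟩).val ≠ 0 := by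
      intro s hs hlt
      exact hx s s1 a hs hs1x haS ⟨(s : ℕ) + d, hlt⟩
        (by simp only [Fin.val_mk]; push_cast; omega)
    -- claim 3 : every support element is ≡ a mod d
    have claim3 : ∀ v : ℕ, ∀ s : Fin n, (s : ℕ) = v → (x s).val ≠ 0 → (s : ℕ) % d = (a : ℕ) := by
      intro v
      induction v using Nat.strong_induction_on with
      | _ v IH =>
        intro s hsv hs
        have hge := hamin s hs
        rcases eq_or_lt_of_le hge with heq | hlt
        · rw [← heq, Nat.mod_eq_of_lt had]
        · have hge1 : (s1 : ℕ) ≤ (s : ℕ) := hs1min s hs (fun h => by subst h; omega)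
          have hx' := down s hs hlt
          have hIH := IH ((s : ℕ) - d) (by omega) ⟨(s : ℕ) - d, by omega⟩ rfl hx'
          simp only [Fin.val_mk] at hIH
          have : (s : ℕ) % d = ((s : ℕ) - d) % d := by
            conv_lhs => rw [show (s : ℕ) = ((s : ℕ) - d) + d by omega]
            rw [Nat.add_mod_right]
          rw [this]; exact hIH
    -- claim 5 : everything ≡ a mod d in range is in the support
    have claim5 : ∀ j : ℕ, ∀ v : ℕ, ∀ h : v < n, v = (a : ℕ) + d * j →
        (x ⟨v, h⟩).val ≠ 0 := by
      intro j
      induction j with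
      | zero =>
        intro v h hv
        have : (⟨v, h⟩ : Fin n) = a := Fin.ext (by simp only [Fin.val_mk]; omega)
        rw [this]; exact haS
      | succ j IH =>
        intro v h hv
        rw [Nat.mul_add, Nat.mul_one] at hv
        have hprev : (a : ℕ) + d * j < n := by omega
        have hxp := IH ((a : ℕ) + d * j) hprev rfl
        have := up ⟨(a : ℕ) + d * j, hprev⟩ hxp (by simp only [Fin.val_mk]; omega)
        have heq : (⟨((⟨(a:ℕ) + d * j, hprev⟩ : Fin n) : ℕ) + d, by simp only [Fin.val_mk]; omega⟩ : Fin n)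
            = ⟨v, h⟩ := Fin.ext (by simp only [Fin.val_mk]; omega)
        rwa [heq] at this
    refine ⟨((a : ℕ), d), ?_, ?_⟩
    · rw [mem_Pfin]
      exact ⟨han, by omega, had, Or.inl (by omega)⟩
    · funext i
      by_cases hi : (x i).val ≠ 0
      · rw [g_apply_eq (claim3 (i : ℕ) i rfl hi), fin2_ne hi]
      · push_neg at hi
        have hne : (i : ℕ) % d ≠ (a : ℕ) := by
          intro h
          obtain ⟨j, hj⟩ : ∃ j, (i : ℕ) = (a : ℕ) + d * j := by
            have h2 := Nat.div_add_mod (i : ℕ) d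
            exact ⟨(i : ℕ) / d, by omega⟩
          have := claim5 j (i : ℕ) i.isLt hj
          simp only [Fin.eta] at this
          exact this hi
        have : g n ((a : ℕ), d) i = 0 := by simp [g, hne]
        rw [this]; exact (Fin.ext hi).symm

lemma g_injOn (n : ℕ) : Set.InjOn (g n) (Pfin n) := by
  have hmod : ∀ a d a' d' : ℕ, (a, d) ∈ Pfin n → (a', d') ∈ Pfin n →
      g n (a, d) = g n (a', d') → a % d' = a' := by
    intro a d a' d' hm hm' hg
    rw [mem_Pfin] at hm hm'
    have h1 : g n (a, d) ⟨a, hm.1⟩ = 1 :=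
      g_apply_eq (by simp only [Fin.val_mk]; exact Nat.mod_eq_of_lt hm.2.2.1)
    have h2 := congrFun hg ⟨a, hm.1⟩
    rw [h1] at h2
    have h3 : (g n (a', d') (⟨a, hm.1⟩ : Fin n)).val ≠ 0 := by rw [← h2]; simp
    have h4 := g_apply_ne h3
    simpa using h4
  have key : ∀ a d a' d' : ℕ, (a, d) ∈ Pfin n → (a', d') ∈ Pfin n →
      g n (a, d) = g n (a', d') → a = a' → d' ≤ d := by
    intro a d a' d' hm hm' hg haa
    rw [mem_Pfin] at hm hm'
    obtain ⟨han, hdn, had, hor⟩ := hm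
    obtain ⟨han', hdn', had', hor'⟩ := hm'
    rcases hor with hlt | heq
    · have h1 : g n (a, d) ⟨a + d, hlt⟩ = 1 := g_apply_eq (by
        simp only [Fin.val_mk]; rw [Nat.add_mod_right, Nat.mod_eq_of_lt had])
      have h2 := congrFun hg ⟨a + d, hlt⟩
      rw [h1] at h2
      have h3 : (g n (a', d') (⟨a + d, hlt⟩ : Fin n)).val ≠ 0 := by rw [← h2]; simp
      have h4 := g_apply_ne h3
      simp only [Fin.val_mk] at h4
      obtain ⟨q, hq⟩ : ∃ q, a + d = a' + d' * q := by
        have h5 := Nat.div_add_mod (a + d) d'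
        exact ⟨(a + d) / d', by omega⟩
      have hq1 : 1 ≤ q := by
        rcases Nat.eq_zero_or_pos q with h | h
        · exfalso; subst h; omega
        · exact h
      calc d' ≤ d' * q := Nat.le_mul_of_pos_right d' hq1
        _ ≤ d := by omega
    · omega
  intro p hp p' hp' hg
  obtain ⟨a, d⟩ := p
  obtain ⟨a', d'⟩ := p'
  simp only [Finset.coe_sort_coe, Finset.mem_coe] at hp hp'
  have e1 := hmod a d a' d' hp hp' hg
  have e2 := hmod a' d' a d hp' hp hg.symm
  have haa : a = a' := by
    have h1 := Nat.mod_le a d'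
    have h2 := Nat.mod_le a' d
    omega
  have hdd : d = d' :=
    le_antisymm (key a' d' a d hp' hp hg.symm haa.symm) (key a d a' d' hp hp' hg haa)
  rw [haa, hdd]

def T (n : ℕ) : ℕ := ∑ d ∈ Finset.range n, min d (n - d)

lemma T_rec (n : ℕ) : T (n + 2) = T n + (n + 1) := by
  have h1 : T (n + 2) = ∑ d ∈ Finset.range (n + 1), min (d + 1) (n + 2 - (d + 1)) + min 0 (n + 2 - 0) := by
    rw [T, Finset.sum_range_succ']
  have h2 : ∀ d ∈ Finset.range (n + 1), min (d + 1) (n + 2 - (d + 1)) = min d (n - d) + 1 := by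
    intro d hd
    rw [Finset.mem_range] at hd
    omega
  rw [h1, Finset.sum_congr rfl h2, Finset.sum_add_distrib, Finset.sum_const, Finset.card_range]
  have h3 : ∑ d ∈ Finset.range (n + 1), min d (n - d) = T n := by
    rw [Finset.sum_range_succ, T]
    simp
  rw [h3]
  simp only [smul_eq_mul, mul_one]
  omega

lemma T_val (n : ℕ) : 4 * T n + n % 2 = n * n := by
  induction n using Nat.strong_induction_on with
  | _ n IH =>
    match n with
    | 0 => simp [T]
    | 1 => simp [T]
    | (m + 2) =>
      have h := IH m (by omega)
      rw [T_rec]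
      have : (m + 2) % 2 = m % 2 := by omega
      rw [this]
      nlinarith [h]

lemma card_Pfin (n : ℕ) : (Pfin n).card = n + T n := by
  have hmap : ∀ p ∈ Pfin n, p.2 ∈ Finset.range (n + 1) := by
    intro p hp
    obtain ⟨a, d⟩ := p
    rw [mem_Pfin] at hp
    simp [hp.2.1]
  rw [Finset.card_eq_sum_card_fiberwise hmap]
  have fiber : ∀ d ∈ Finset.range (n + 1),
      ((Pfin n).filter (fun p => p.2 = d)).card
        = (if d = n then n else min d (n - d)) := by
    intro d hd
    rw [Finset.mem_range] at hd
    have himg : (Pfin n).filter (fun p => p.2 = d)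
        = (Finset.range (if d = n then n else min d (n - d))).image (fun a => (a, d)) := by
      ext ⟨a, d'⟩
      simp only [Finset.mem_filter, Finset.mem_image, Finset.mem_range, mem_Pfin]
      constructor
      · rintro ⟨⟨h1, h2, h3, h4⟩, h5⟩
        subst h5
        refine ⟨a, ?_, rfl⟩
        split
        · omega
        · omega
      · rintro ⟨b, hb, heq⟩
        injection heq with h1 h2
        subst h1; subst h2
        split at hb
        · next hdn => exact ⟨⟨by omega, by omega, by omega, Or.inr hdn⟩, rfl⟩
        · next hdn => exact ⟨⟨by omega, by omega, by omega, Or.inl (by omega)⟩, rfl⟩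
    rw [himg, Finset.card_image_of_injective _ (fun x y h => (Prod.mk.injEq .. ▸ h).1),
      Finset.card_range]
  rw [Finset.sum_congr rfl fiber, Finset.sum_range_succ]
  rw [if_pos rfl]
  have : ∀ d ∈ Finset.range n, (if d = n then n else min d (n - d)) = min d (n - d) := by
    intro d hd
    rw [Finset.mem_range] at hd
    rw [if_neg (by omega)]
  rw [Finset.sum_congr rfl this]
  rw [T]
  omega

lemma zero_not_mem (n : ℕ) :
    (fun _ : Fin n => (0 : Fin 2)) ∉ (Pfin n).image (g n) := by
  intro h
  obtain ⟨⟨a, d⟩, hm, heq⟩ := Finset.mem_image.1 h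
  rw [mem_Pfin] at hm
  have h1 : g n (a, d) ⟨a, hm.1⟩ = 1 :=
    g_apply_eq (by simp only [Fin.val_mk]; exact Nat.mod_eq_of_lt hm.2.2.1)
  rw [heq] at h1
  simp at h1

lemma B2_eq (n : ℕ) :
    B2 n = ↑(insert (fun _ : Fin n => (0 : Fin 2)) ((Pfin n).image (g n))) := by
  ext x
  simp only [Finset.coe_insert, Set.mem_insert_iff, Finset.coe_image, Set.mem_image,
    Finset.mem_coe, B2, Set.mem_setOf_eq]
  constructor
  · intro hx
    rcases bgp_structure x hx with h | ⟨p, hp, hpe⟩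
    · left; exact h
    · right; exact ⟨p, hp, hpe⟩
  · rintro (rfl | ⟨⟨a, d⟩, hp, rfl⟩)
    · exact zero_bgp n
    · exact g_bgp (mem_Pfin.1 hp).2.2.1

end BGPaux

/-- **Equation (26).** For every `n ≥ 1`, the number of binary sequences of length
`n` satisfying the BGP constraint is exactly `(n+2)²/4` if `n` is even and
`(n+1)(n+3)/4` if `n` is odd (stated multiplied through by `4`). -/


theorem card_B2 (n : ℕ) (hn : 1 ≤ n) :
    (Even n → 4 * Nat.card ↥(B2 n) = (n + 2) ^ 2) ∧
    (Odd n → 4 * Nat.card ↥(B2 n) = (n + 1) * (n + 3)) := by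
  have hcard : Nat.card ↥(B2 n) = 1 + n + BGPaux.T n := by
    rw [BGPaux.B2_eq n, Nat.card_coe_set_eq, Set.ncard_coe_finset,
      Finset.card_insert_of_notMem (BGPaux.zero_not_mem n),
      Finset.card_image_of_injOn (BGPaux.g_injOn n), BGPaux.card_Pfin]
    omega
  have hT := BGPaux.T_val n
  constructor
  · intro he
    have h2 : n % 2 = 0 := Nat.even_iff.1 he
    have : (n + 2) ^ 2 = n * n + 4 * n + 4 := by ring
    omega
  · intro ho
    have h2 : n % 2 = 1 := Nat.odd_iff.1 ho
    have : (n + 1) * (n + 3) = n * n + 4 * n + 3 := by ring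
    omega
end

section
/- For all integers n, t ≥ 1, the set of binary sequences of length n satisfying the BGP(t) constraint equals the union of the (t,∞)-constrained sequences and the arithmetic-progression sequences with parameters at most t: B_{2;t}(n) = S_{t,∞}(n) ∪ Q_t(n). (Theorem 5) -/
/-- A binary sequence `x` of length `n` (indexed by `Fin n`, position `i : Fin n`
corresponding to the paper's 1-indexed position `i + 1`) satisfies the BGP(t)
constraint: for all positions `k, l, m` in the support of `x` (not necessarily
distinct) with `max {|k-l|, |l-m|, |m-k|} ≤ t`, if the integer `k + l - m` is a
valid position then it also lies in the support of `x`. -/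
def SatisfiesBGPt (t : ℕ) {n : ℕ} (x : Fin n → Fin 2) : Prop :=
  ∀ k l m : Fin n, (x k).val ≠ 0 → (x l).val ≠ 0 → (x m).val ≠ 0 →
    max (max |((k : ℕ) : ℤ) - ((l : ℕ) : ℤ)| |((l : ℕ) : ℤ) - ((m : ℕ) : ℤ)|)
        |((m : ℕ) : ℤ) - ((k : ℕ) : ℤ)| ≤ (t : ℤ) →
    ∀ i : Fin n, ((i : ℕ) : ℤ) = ((k : ℕ) : ℤ) + ((l : ℕ) : ℤ) - ((m : ℕ) : ℤ) →
      (x i).val ≠ 0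

/-- `B2t t n`: the set of binary sequences of length `n` satisfying BGP(t). -/
def B2t (t n : ℕ) : Set (Fin n → Fin 2) := {x | SatisfiesBGPt t x}

/-- `Sinf t n`: the set of `(t,∞)`-constrained binary sequences of length `n`,
i.e. any two distinct ones are more than `t` positions apart (at least `t` zeros
between any two ones). -/
def Sinf (t n : ℕ) : Set (Fin n → Fin 2) :=
  {x | ∀ i j : Fin n, (x i).val ≠ 0 → (x j).val ≠ 0 → i ≠ j →
    (t : ℤ) < |((i : ℕ) : ℤ) - ((j : ℕ) : ℤ)|}

/-- `Q t n`: the set of binary sequences `x` of length `n` whose support equals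
`(a + dℤ) ∩ [n]` for some `a, d ∈ [0, t]` (support in 1-indexed positions). -/
def Q (t n : ℕ) : Set (Fin n → Fin 2) :=
  {x | ∃ a d : ℕ, a ≤ t ∧ d ≤ t ∧
    ∀ i : Fin n,
      ((x i).val ≠ 0 ↔ ∃ j : ℤ, ((i : ℕ) : ℤ) + 1 = (a : ℤ) + (d : ℤ) * j)}

section Aux

variable {n t : ℕ} {x : Fin n → Fin 2}

/-- support predicate on natural-number indices -/
def PP (x : Fin n → Fin 2) (m : ℕ) : Prop := ∃ h : m < n, (x ⟨m, h⟩).val ≠ 0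

lemma bgp_step (hB : SatisfiesBGPt t x) {k l : Fin n}
    (hk : (x k).val ≠ 0) (hl : (x l).val ≠ 0)
    (hd : |((k:ℕ):ℤ) - ((l:ℕ):ℤ)| ≤ (t:ℤ)) {i : Fin n}
    (hi : ((i:ℕ):ℤ) = 2*((k:ℕ):ℤ) - ((l:ℕ):ℤ)) : (x i).val ≠ 0 := by
  refine hB k k l hk hk hl ?_ i (by linarith)
  refine max_le (max_le ?_ hd) (by rwa [abs_sub_comm])
  simpa using (by positivity : (0:ℤ) ≤ (t:ℤ))

lemma step_up (hB : SatisfiesBGPt t x) {d : ℕ} (hdt : d ≤ t) {p : ℕ}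
    (h0 : PP x p) (h1 : PP x (p + d)) (h2 : p + 2*d < n) : PP x (p + 2*d) := by
  obtain ⟨hp0, v0⟩ := h0
  obtain ⟨hp1, v1⟩ := h1
  refine ⟨h2, bgp_step hB (k := ⟨p + d, hp1⟩) (l := ⟨p, hp0⟩) v1 v0 ?_ (i := ⟨p + 2*d, h2⟩) ?_⟩
  · show |((p + d : ℕ) : ℤ) - ((p:ℕ) : ℤ)| ≤ (t:ℤ)
    rw [show ((p + d : ℕ) : ℤ) - ((p:ℕ) : ℤ) = (d:ℤ) by push_cast; ring,
      abs_of_nonneg (by positivity)]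
    exact_mod_cast hdt
  · show ((p + 2*d : ℕ) : ℤ) = 2*((p + d : ℕ) : ℤ) - ((p:ℕ):ℤ)
    push_cast; ring

lemma step_down (hB : SatisfiesBGPt t x) {d : ℕ} (hdt : d ≤ t) {p : ℕ}
    (hdp : d ≤ p) (h0 : PP x p) (h1 : PP x (p + d)) : PP x (p - d) := by
  obtain ⟨hp0, v0⟩ := h0
  obtain ⟨hp1, v1⟩ := h1
  have h2 : p - d < n := by omega
  refine ⟨h2, bgp_step hB (k := ⟨p, hp0⟩) (l := ⟨p + d, hp1⟩) v0 v1 ?_ (i := ⟨p - d, h2⟩) ?_⟩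
  · show |((p : ℕ) : ℤ) - ((p + d:ℕ) : ℤ)| ≤ (t:ℤ)
    rw [show ((p : ℕ) : ℤ) - ((p + d:ℕ) : ℤ) = -(d:ℤ) by push_cast; ring, abs_neg,
      abs_of_nonneg (by positivity)]
    exact_mod_cast hdt
  · show ((p - d : ℕ) : ℤ) = 2*((p : ℕ) : ℤ) - ((p + d:ℕ):ℤ)
    rw [Nat.cast_sub hdp]; push_cast; ring

lemma up_all (hB : SatisfiesBGPt t x) {d : ℕ} (hdt : d ≤ t) {p : ℕ}
    (h0 : PP x p) (h1 : PP x (p + d)) :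
    ∀ s : ℕ, p + s * d < n → PP x (p + s * d) := by
  intro s
  induction s using Nat.strong_induction_on with
  | _ s ih =>
    match s with
    | 0 => intro _; simpa using h0
    | 1 => intro _; simpa using h1
    | (s+2) =>
      intro h
      have e1 : (s+1) * d = s * d + d := by ring
      have e2 : (s+2) * d = s * d + 2*d := by ring
      have hh0 : PP x (p + s * d) := ih s (by omega) (by omega)
      have hh1' : PP x (p + s * d + d) := by
        have := ih (s+1) (by omega) (by omega)
        rwa [e1, ← add_assoc] at this
      have := step_up hB hdt hh0 hh1' (by omega)
      rwa [show p + s*d + 2*d = p + (s+2)*d by ring] at this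

lemma down_all (hB : SatisfiesBGPt t x) {d : ℕ} (hdt : d ≤ t) {p : ℕ}
    (hn1 : p + d < n) (h0 : PP x p) (h1 : PP x (p + d)) :
    ∀ s : ℕ, s * d ≤ p → PP x (p - s * d) ∧ PP x (p - s * d + d) := by
  intro s
  induction s with
  | zero => simpa using ⟨h0, h1⟩
  | succ s ih =>
    intro h
    have e1 : (s+1) * d = s * d + d := by ring
    obtain ⟨hh0, hh1⟩ := ih (by omega)
    have hdle : d ≤ p - s * d := by omega
    have hd0 : PP x (p - s * d - d) := step_down hB hdt hdle hh0 hh1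
    constructor
    · rw [show p - (s+1)*d = p - s*d - d by omega]; exact hd0
    · rw [show p - (s+1)*d + d = p - s*d by omega]; exact hh0

/-- All positions in the arithmetic progression through `p` with difference `d`
are in the support, given two consecutive AP support elements. -/
lemma ap_mem (hB : SatisfiesBGPt t x) {d : ℕ} (hdt : d ≤ t) {p : ℕ}
    (hn1 : p + d < n) (h0 : PP x p) (h1 : PP x (p + d)) :
    ∀ m : ℕ, m < n → (∃ j : ℤ, (m:ℤ) = (p:ℤ) + j * (d:ℤ)) → PP x m := by
  intro m hm ⟨j, hj⟩
  rcases Nat.eq_zero_or_pos d with hd0 | hd0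
  · have : m = p := by subst hd0; push_cast at hj; omega
    subst this; exact h0
  rcases le_or_gt (p:ℤ) (m:ℤ) with h | h
  · have hjn : 0 ≤ j := by
      rcases le_or_gt 0 j with h' | h'
      · exact h'
      · exfalso
        have : j * (d:ℤ) ≤ -1 * (d:ℤ) := by
          apply mul_le_mul_of_nonneg_right (by omega) (by positivity)
        have hd1 : (1:ℤ) ≤ (d:ℤ) := by exact_mod_cast hd0
        linarith
    set s := j.toNat with hs
    have hsj : (s:ℤ) = j := Int.toNat_of_nonneg hjn
    have hms : m = p + s * d := by
      have : (m:ℤ) = (p:ℤ) + (s:ℤ) * (d:ℤ) := by rw [hsj]; exact hj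
      have h2 : ((p + s*d : ℕ) : ℤ) = (p:ℤ) + (s:ℤ)*(d:ℤ) := by push_cast; ring
      exact_mod_cast this.trans h2.symm
    rw [hms]; exact up_all hB hdt h0 h1 s (hms ▸ hm)
  · have hjn : j < 0 := by
      rcases le_or_gt 0 j with h' | h'
      · exfalso
        have : 0 ≤ j * (d:ℤ) := mul_nonneg h' (by positivity)
        linarith
      · exact h'
    set s := (-j).toNat with hs
    have hsj : (s:ℤ) = -j := Int.toNat_of_nonneg (by omega)
    have hsd : s * d ≤ p ∧ m = p - s * d := by
      have h2 : (m:ℤ) = (p:ℤ) - (s:ℤ)*(d:ℤ) := by rw [hsj]; linarith [hj]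
      have h3 : ((s*d : ℕ):ℤ) = (s:ℤ)*(d:ℤ) := by push_cast; ring
      have h4 : (s*d : ℕ) ≤ p := by
        have : (0:ℤ) ≤ (m:ℤ) := by positivity
        have : ((s*d : ℕ):ℤ) ≤ (p:ℤ) := by omega
        exact_mod_cast this
      refine ⟨h4, ?_⟩
      have : ((p - s*d : ℕ) : ℤ) = (p:ℤ) - (s:ℤ)*(d:ℤ) := by
        rw [Nat.cast_sub h4]; push_cast; ring
      exact_mod_cast h2.trans this.symm
    rw [hsd.2]
    exact (down_all hB hdt hn1 h0 h1 s hsd.1).1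

end Aux

lemma pp_of {n : ℕ} {x : Fin n → Fin 2} (i : Fin n) (h : (x i).val ≠ 0) : PP x (i : ℕ) :=
  ⟨i.2, by rwa [Fin.eta]⟩

lemma pp_val {n : ℕ} {x : Fin n → Fin 2} {m : ℕ} (h : PP x m) (i : Fin n)
    (him : (i : ℕ) = m) : (x i).val ≠ 0 := by
  obtain ⟨h1, h2⟩ := h
  subst him
  rwa [Fin.eta] at h2

/-- **Theorem 5.** For all integers `n, t ≥ 1`,
`B_{2;t}(n) = S_{t,∞}(n) ∪ Q_t(n)`. -/
theorem B2t_eq_Sinf_union_Q (n t : ℕ) (hn : 1 ≤ n) (ht : 1 ≤ t) :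
    B2t t n = Sinf t n ∪ Q t n := by
  ext x
  simp only [Set.mem_union]
  constructor
  · intro hB
    have hB' : SatisfiesBGPt t x := hB
    by_cases hS : x ∈ Sinf t n
    · exact Or.inl hS
    right
    simp only [Sinf, Set.mem_setOf_eq] at hS
    push_neg at hS
    obtain ⟨i0, j0, hi0, hj0, hne, hle⟩ := hS
    have habs := abs_le.mp hle
    have hkey : ∃ e, 0 < e ∧ e ≤ t ∧ ∃ u, PP x u ∧ PP x (u + e) := by
      have hne' : (i0 : ℕ) ≠ (j0 : ℕ) := fun h => hne (Fin.ext h)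
      rcases Nat.lt_or_ge (i0 : ℕ) (j0 : ℕ) with h | h
      · refine ⟨(j0 : ℕ) - (i0 : ℕ), by omega, by omega, (i0 : ℕ), pp_of i0 hi0, ?_⟩
        rw [show (i0 : ℕ) + ((j0 : ℕ) - (i0 : ℕ)) = (j0 : ℕ) by omega]
        exact pp_of j0 hj0
      · refine ⟨(i0 : ℕ) - (j0 : ℕ), by omega, by omega, (j0 : ℕ), pp_of j0 hj0, ?_⟩
        rw [show (j0 : ℕ) + ((i0 : ℕ) - (j0 : ℕ)) = (i0 : ℕ) by omega]
        exact pp_of i0 hi0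
    set D : Set ℕ := {e | 0 < e ∧ ∃ u, PP x u ∧ PP x (u + e)} with hD
    obtain ⟨e0, he1, he2, he3⟩ := hkey
    have hDne : D.Nonempty := ⟨e0, he1, he3⟩
    set d := sInf D with hdd
    obtain ⟨hd0, p, hp, hpd⟩ := Nat.sInf_mem hDne
    have hdt : d ≤ t := le_trans (Nat.sInf_le (⟨he1, he3⟩ : e0 ∈ D)) he2
    have hmin : ∀ e ∈ D, d ≤ e := fun e he => Nat.sInf_le he
    have hn1 : p + d < n := hpd.1
    have hAP : ∀ m : ℕ, m < n → (∃ j : ℤ, (m:ℤ) = (p:ℤ) + j * (d:ℤ)) → PP x m :=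
      ap_mem hB' hdt hn1 hp hpd
    have hd0' : (0:ℤ) < (d:ℤ) := by exact_mod_cast hd0
    have hres : ∀ m, PP x m → ∃ j : ℤ, (m:ℤ) = (p:ℤ) + j * (d:ℤ) := by
      intro m hm
      obtain ⟨hmn, -⟩ := id hm
      by_contra hc
      push_neg at hc
      obtain ⟨q, r, hr0, hrd, heq⟩ :
          ∃ q r : ℤ, 0 ≤ r ∧ r < (d:ℤ) ∧ (m:ℤ) - (p:ℤ) = (d:ℤ) * q + r :=
        ⟨((m:ℤ) - p) / d, ((m:ℤ) - p) % d, Int.emod_nonneg _ (by omega),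
          Int.emod_lt_of_pos _ hd0', (Int.mul_ediv_add_emod _ _).symm⟩
      have hrne : r ≠ 0 := by
        intro h0
        rw [h0] at heq
        exact hc q (by linear_combination heq)
      rcases le_or_gt r (m:ℤ) with h1 | h1
      · set s := r.toNat with hs
        have hsr : (s:ℤ) = r := Int.toNat_of_nonneg hr0
        have hsm : s ≤ m := by omega
        have hm' : PP x (m - s) := by
          apply hAP (m - s) (by omega)
          refine ⟨q, ?_⟩
          rw [Nat.cast_sub hsm, hsr]
          linear_combination heq
        have hsD : s ∈ D := by
          refine ⟨by omega, m - s, hm', ?_⟩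
          rw [show m - s + s = m by omega]
          exact hm
        have := hmin s hsD
        omega
      · set s := ((d:ℤ) - r).toNat with hs
        have hsr : (s:ℤ) = (d:ℤ) - r := Int.toNat_of_nonneg (by omega)
        have hm'' : PP x (m + s) := by
          apply hAP (m + s) (by omega)
          refine ⟨q + 1, ?_⟩
          push_cast
          linear_combination heq + hsr
        have hsD : s ∈ D := ⟨by omega, m, hm, hm''⟩
        have := hmin s hsD
        omega
    have hm0 : PP x (p % d) := by
      apply hAP (p % d) (by have := Nat.mod_le p d; omega)
      refine ⟨-((p / d : ℕ) : ℤ), ?_⟩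
      have h' : ((p % d : ℕ):ℤ) + (d:ℤ) * ((p / d : ℕ):ℤ) = (p:ℤ) := by
        exact_mod_cast Nat.mod_add_div p d
      linear_combination h'
    set A : Set ℕ := {m | PP x m} with hA
    have hAne : A.Nonempty := ⟨p, hp⟩
    set a := sInf A with haa
    have haA : PP x a := Nat.sInf_mem hAne
    have ham0 : a ≤ p % d := Nat.sInf_le hm0
    have had : a < d := lt_of_le_of_lt ham0 (Nat.mod_lt p hd0)
    obtain ⟨ja, hja⟩ := hres a haA
    have hchar : ∀ i : Fin n, (x i).val ≠ 0 ↔ ∃ j : ℤ, ((i:ℕ):ℤ) = (a:ℤ) + j * (d:ℤ) := by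
      intro i
      constructor
      · intro hv
        obtain ⟨jm, hjm⟩ := hres (i : ℕ) (pp_of i hv)
        exact ⟨jm - ja, by linear_combination hjm - hja⟩
      · rintro ⟨j, hj⟩
        exact pp_val (hAP (i : ℕ) i.2 ⟨j + ja, by linear_combination hj + hja⟩) i rfl
    refine ⟨a + 1, d, by omega, hdt, fun i => ?_⟩
    rw [hchar i]
    constructor
    · rintro ⟨j, hj⟩; exact ⟨j, by push_cast; linear_combination hj⟩
    · rintro ⟨j, hj⟩; push_cast at hj; exact ⟨j, by linear_combination hj⟩
  · rintro (hS | hQ)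
    · intro k l m hk hl hm hmax i hi
      have h1 : |((k:ℕ):ℤ) - ((l:ℕ):ℤ)| ≤ (t:ℤ) :=
        le_trans (le_trans (le_max_left _ _) (le_max_left _ _)) hmax
      have h2 : |((l:ℕ):ℤ) - ((m:ℕ):ℤ)| ≤ (t:ℤ) :=
        le_trans (le_trans (le_max_right _ _) (le_max_left _ _)) hmax
      have hkl : k = l := by
        by_contra h
        exact absurd h1 (not_le.mpr (hS k l hk hl h))
      have hlm : l = m := by
        by_contra h
        exact absurd h2 (not_le.mpr (hS l m hl hm h))
      subst hkl; subst hlm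
      have hik : (i : ℕ) = (k : ℕ) := by omega
      rw [Fin.ext hik]
      exact hk
    · obtain ⟨a, d, _, _, hx⟩ := hQ
      intro k l m hk hl hm _ i hi
      obtain ⟨jk, hjk⟩ := (hx k).mp hk
      obtain ⟨jl, hjl⟩ := (hx l).mp hl
      obtain ⟨jm, hjm⟩ := (hx m).mp hm
      exact (hx i).mpr ⟨jk + jl - jm, by linear_combination hi + hjk + hjl - hjm⟩
end

section
/- For every t ≥ 1, the capacity of the BGP(t) constraint equals the capacity of the (t,∞) run-length constraint: H_2(t) = C(t,∞) = log₂ ρ_t, where ρ_t is the unique real root in the open interval (1,2) of the polynomial z^{t+1} − z^t − 1. That is, (log₂|B_{2;t}(n)|)/n → log₂ ρ_t as n → ∞. (Corollary 6) -/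
def RLLset (t n : ℕ) : Set (Fin n → Fin 2) :=
  {x | ∀ k l : Fin n, (x k).val ≠ 0 → (x l).val ≠ 0 → (k:ℕ) < (l:ℕ) → (k:ℕ) + t < (l:ℕ)}


lemma rll_subset_bgp (t n : ℕ) : RLLset t n ⊆ B2t t n := by
  intro x hx k l m hk hl hm hmax i hi
  -- claim k = m
  have hkm : (k:ℕ) = (m:ℕ) := by
    by_contra hne
    rcases Nat.lt_or_ge (k:ℕ) (m:ℕ) with h | h
    · have := hx k m hk hm h
      have habs : |((m:ℕ):ℤ) - ((k:ℕ):ℤ)| ≤ t := le_trans (le_max_right _ _) hmax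
      rw [abs_le] at habs
      omega
    · have h' : (m:ℕ) < (k:ℕ) := by omega
      have := hx m k hm hk h'
      have habs : |((m:ℕ):ℤ) - ((k:ℕ):ℤ)| ≤ t := le_trans (le_max_right _ _) hmax
      rw [abs_le] at habs
      omega
  have : (i:ℕ) = (l:ℕ) := by omega
  have : i = l := Fin.ext this
  rwa [this]


def prep0 {t n : ℕ} (x : ↥(RLLset t n)) : ↥(RLLset t (n+1)) :=
  ⟨fun i => if h : (i:ℕ) = 0 then 0 else x.1 ⟨(i:ℕ) - 1, by omega⟩, by
    intro k l hk hl hkl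
    simp only at hk hl
    have hk0 : (k:ℕ) ≠ 0 := by intro h; rw [dif_pos h] at hk; simp at hk
    have hl0 : (l:ℕ) ≠ 0 := by omega
    rw [dif_neg hk0] at hk; rw [dif_neg hl0] at hl
    have := x.2 _ _ hk hl (by simp; omega)
    simp at this; omega⟩

def prep1 {t n : ℕ} (x : ↥(RLLset t n)) : ↥(RLLset t (n+t+1)) :=
  ⟨fun i => if (i:ℕ) = 0 then 1 else if h : (i:ℕ) < t+1 then 0 else x.1 ⟨(i:ℕ) - (t+1), by omega⟩, by
    intro k l hk hl hkl
    simp only at hk hl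
    have hl0 : (l:ℕ) ≠ 0 := by omega
    have hl1 : ¬ ((l:ℕ) < t+1) := by
      intro h; rw [if_neg hl0, dif_pos h] at hl; simp at hl
    rw [if_neg hl0, dif_neg hl1] at hl
    by_cases hk0 : (k:ℕ) = 0
    · omega
    · have hk1 : ¬ ((k:ℕ) < t+1) := by
        intro h; rw [if_neg hk0, dif_pos h] at hk; simp at hk
      rw [if_neg hk0, dif_neg hk1] at hk
      have := x.2 _ _ hk hl (by simp; omega)
      simp at this; omega⟩

lemma prep0_val {t n : ℕ} (x : ↥(RLLset t n)) (i : Fin n) :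
    (prep0 x).1 ⟨(i:ℕ)+1, by omega⟩ = x.1 i := by
  simp only [prep0]
  rw [dif_neg (by simp)]
  have e : (⟨(i:ℕ)+1-1, by omega⟩ : Fin n) = i := by ext; simp
  rw [e]

lemma prep1_val {t n : ℕ} (x : ↥(RLLset t n)) (i : Fin n) :
    (prep1 x).1 ⟨(i:ℕ)+(t+1), by omega⟩ = x.1 i := by
  simp only [prep1]
  rw [if_neg (by omega), dif_neg (by omega)]
  have e : (⟨(i:ℕ)+(t+1)-(t+1), by omega⟩ : Fin n) = i := by ext; simp
  rw [e]

lemma prep0_inj {t n : ℕ} : Function.Injective (prep0 (t:=t) (n:=n)) := by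
  intro x y h
  apply Subtype.ext; funext i
  have h' := congrFun (Subtype.ext_iff.mp h) ⟨(i:ℕ)+1, by omega⟩
  rwa [prep0_val, prep0_val] at h'

lemma prep1_inj {t n : ℕ} : Function.Injective (prep1 (t:=t) (n:=n)) := by
  intro x y h
  apply Subtype.ext; funext i
  have h' := congrFun (Subtype.ext_iff.mp h) ⟨(i:ℕ)+(t+1), by omega⟩
  rwa [prep1_val, prep1_val] at h'

lemma prep_ne {t m : ℕ} (x : ↥(RLLset t (m+t))) (y : ↥(RLLset t m)) :
    (prep0 x : ↥(RLLset t (m+t+1))) ≠ prep1 y := by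
  intro h
  have h' := congrFun (Subtype.ext_iff.mp h) ⟨0, by omega⟩
  simp [prep0, prep1] at h'

lemma scard_lower (t m : ℕ) :
    Nat.card ↥(RLLset t (m+t)) + Nat.card ↥(RLLset t m) ≤ Nat.card ↥(RLLset t (m+t+1)) := by
  have key : Function.Injective
      (fun a : ↥(RLLset t (m+t)) ⊕ ↥(RLLset t m) =>
        Sum.elim (fun x => prep0 x) (fun y => (prep1 y : ↥(RLLset t (m+(t+1))))) a) := by
    intro a b hab
    cases a with
    | inl x => cases b with
      | inl x' => simp only [Sum.elim_inl] at hab; rw [prep0_inj hab]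
      | inr y' => exact absurd hab (prep_ne x y')
    | inr y => cases b with
      | inl x' => exact absurd hab.symm (prep_ne x' y)
      | inr y' => simp only [Sum.elim_inr] at hab; rw [prep1_inj hab]
  calc Nat.card ↥(RLLset t (m+t)) + Nat.card ↥(RLLset t m)
      = Nat.card (↥(RLLset t (m+t)) ⊕ ↥(RLLset t m)) := (Nat.card_sum).symm
    _ ≤ Nat.card ↥(RLLset t (m+t+1)) := Nat.card_le_card_of_injective _ key


-- tail : drop first symbol
def tail1 {t n : ℕ} (y : ↥(RLLset t (n+1))) : ↥(RLLset t n) :=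
  ⟨fun i => y.1 ⟨(i:ℕ)+1, by omega⟩, by
    intro k l hk hl hkl
    have := y.2 ⟨(k:ℕ)+1, by omega⟩ ⟨(l:ℕ)+1, by omega⟩ hk hl (by simp; omega)
    simp at this; omega⟩

def dropt {t n : ℕ} (y : ↥(RLLset t (n+t+1))) : ↥(RLLset t n) :=
  ⟨fun i => y.1 ⟨(i:ℕ)+(t+1), by omega⟩, by
    intro k l hk hl hkl
    have := y.2 ⟨(k:ℕ)+(t+1), by omega⟩ ⟨(l:ℕ)+(t+1), by omega⟩ hk hl (by simp; omega)
    simp at this; omega⟩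

lemma scard_upper (t m : ℕ) :
    Nat.card ↥(RLLset t (m+t+1)) ≤ Nat.card ↥(RLLset t (m+t)) + Nat.card ↥(RLLset t m) := by
  have key : Function.Injective
      (fun y : ↥(RLLset t (m+t+1)) =>
        if (y.1 ⟨0, by omega⟩).val = 0 then Sum.inl (tail1 y)
        else (Sum.inr (dropt y) : ↥(RLLset t (m+t)) ⊕ ↥(RLLset t m))) := by
    intro y y' h
    simp only at h
    by_cases h1 : (y.1 ⟨0, by omega⟩).val = 0 <;>
      by_cases h2 : (y'.1 ⟨0, by omega⟩).val = 0
    · -- both start with 0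
      rw [if_pos h1, if_pos h2] at h
      have htails := Sum.inl.inj h
      apply Subtype.ext; funext i
      rcases Nat.eq_zero_or_pos (i:ℕ) with h0 | h0
      · have e : i = ⟨0, by omega⟩ := by ext; show (i:ℕ) = 0; omega
        rw [e]
        have : (y.1 ⟨0, by omega⟩).val = (y'.1 ⟨0, by omega⟩).val := by omega
        exact Fin.ext this
      · have h' := congrFun (Subtype.ext_iff.mp htails) ⟨(i:ℕ)-1, by omega⟩
        simp only [tail1] at h'
        have e : (⟨(i:ℕ)-1+1, by omega⟩ : Fin (m+t+1)) = i := by ext; simp; omega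
        rwa [e] at h'
    · rw [if_pos h1, if_neg h2] at h; exact absurd h (by simp)
    · rw [if_neg h1, if_pos h2] at h; exact absurd h (by simp)
    · -- both start with 1
      rw [if_neg h1, if_neg h2] at h
      have hdrops := Sum.inr.inj h
      apply Subtype.ext; funext i
      -- zeros in positions 1..t
      have zero1 : ∀ (z : ↥(RLLset t (m+t+1))), (z.1 ⟨0, by omega⟩).val ≠ 0 →
          ∀ j : Fin (m+t+1), 0 < (j:ℕ) → (j:ℕ) < t+1 → (z.1 j).val = 0 := by
        intro z hz j hj1 hj2
        by_contra hne
        have := z.2 ⟨0, by omega⟩ j hz hne (by simpa using hj1)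
        simp at this; omega
      rcases Nat.lt_trichotomy (i:ℕ) 1 with h0 | h0
      · have e : i = ⟨0, by omega⟩ := by ext; show (i:ℕ) = 0; omega
        rw [e]
        have b1 : (y.1 ⟨0, by omega⟩).val = 1 := by have := (y.1 ⟨0, by omega⟩).isLt; omega
        have b2 : (y'.1 ⟨0, by omega⟩).val = 1 := by have := (y'.1 ⟨0, by omega⟩).isLt; omega
        exact Fin.ext (by omega)
      · rcases Nat.lt_or_ge (i:ℕ) (t+1) with hc | hc
        · have z1 := zero1 y h1 i (by omega) hc
          have z2 := zero1 y' h2 i (by omega) hc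
          exact Fin.ext (by omega)
        · have h' := congrFun (Subtype.ext_iff.mp hdrops) ⟨(i:ℕ)-(t+1), by omega⟩
          simp only [dropt] at h'
          have e : (⟨(i:ℕ)-(t+1)+(t+1), by omega⟩ : Fin (m+t+1)) = i := by ext; simp; omega
          rwa [e] at h'
  calc Nat.card ↥(RLLset t (m+t+1))
      ≤ Nat.card (↥(RLLset t (m+t)) ⊕ ↥(RLLset t m)) := Nat.card_le_card_of_injective _ key
    _ = Nat.card ↥(RLLset t (m+t)) + Nat.card ↥(RLLset t m) := Nat.card_sum


lemma scard_pos (t n : ℕ) : 1 ≤ Nat.card ↥(RLLset t n) := by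
  have : (fun _ : Fin n => (0 : Fin 2)) ∈ RLLset t n := by
    intro k l hk; simp at hk
  have hne : Nonempty ↥(RLLset t n) := ⟨⟨_, this⟩⟩
  have : 0 < Nat.card ↥(RLLset t n) := Nat.card_pos
  omega

lemma scard_small (t n : ℕ) (h : n ≤ t) : Nat.card ↥(RLLset t n) ≤ n + 1 := by
  classical
  have key : Function.Injective (fun x : ↥(RLLset t n) =>
      if h : ∃ i, (x.1 i).val ≠ 0 then some h.choose else none) := by
    intro x y hxy
    have single : ∀ (z : ↥(RLLset t n)) (a b : Fin n), (z.1 a).val ≠ 0 → (z.1 b).val ≠ 0 → a = b := by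
      intro z a b ha hb
      by_contra hne
      rcases Nat.lt_trichotomy (a:ℕ) (b:ℕ) with hc | hc | hc
      · have := z.2 a b ha hb hc; have := b.isLt; omega
      · exact hne (Fin.ext hc)
      · have := z.2 b a hb ha hc; have := a.isLt; omega
    simp only at hxy
    by_cases e1 : ∃ i, (x.1 i).val ≠ 0 <;> by_cases e2 : ∃ i, (y.1 i).val ≠ 0
    · rw [dif_pos e1, dif_pos e2] at hxy
      apply Subtype.ext; funext i
      have hx1 := e1.choose_spec
      have hy1 := e2.choose_spec
      have heq : e1.choose = e2.choose := Option.some.inj hxy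
      by_cases hi : (x.1 i).val ≠ 0
      · have hix : i = e1.choose := single x i e1.choose hi hx1
        have hiy : i = e2.choose := by rw [hix, heq]
        have : (y.1 i).val ≠ 0 := by rw [hiy]; exact hy1
        have v1 : (x.1 i).val = 1 := by have := (x.1 i).isLt; omega
        have v2 : (y.1 i).val = 1 := by have := (y.1 i).isLt; omega
        exact Fin.ext (by omega)
      · push_neg at hi
        have hyi : (y.1 i).val = 0 := by
          by_contra hyiz
          have : i = e2.choose := single y i e2.choose hyiz e2.choose_spec
          rw [this, ← heq] at hi
          exact e1.choose_spec hi
        exact Fin.ext (by omega)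
    · rw [dif_pos e1, dif_neg e2] at hxy; simp at hxy
    · rw [dif_neg e1, dif_pos e2] at hxy; simp at hxy
    · push_neg at e1 e2
      apply Subtype.ext; funext i
      exact Fin.ext (by have := e1 i; have := e2 i; omega)
  calc Nat.card ↥(RLLset t n) ≤ Nat.card (Option (Fin n)) :=
        Nat.card_le_card_of_injective _ key
    _ = n + 1 := by simp [Nat.card_eq_fintype_card]


lemma bgp_struct (t n : ℕ) (x : Fin n → Fin 2) (hx : x ∈ B2t t n) (hnot : x ∉ RLLset t n) :
    ∃ d r : ℕ, 0 < d ∧ d ≤ t ∧ r < d ∧ ∀ i : Fin n, (x i).val ≠ 0 ↔ (i:ℕ) % d = r := by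
  -- extract a close pair
  simp only [RLLset, Set.mem_setOf_eq, not_forall] at hnot
  obtain ⟨a₀, b₀, ha₀, hb₀, hab₀, hclose⟩ := hnot
  push_neg at hclose
  -- the set of gaps
  set D : Set ℕ := {d | 0 < d ∧ ∃ k l : Fin n, (x k).val ≠ 0 ∧ (x l).val ≠ 0 ∧ (l:ℕ) = (k:ℕ) + d} with hD
  have hD0 : ((b₀:ℕ) - (a₀:ℕ)) ∈ D := ⟨by omega, a₀, b₀, ha₀, hb₀, by omega⟩
  obtain ⟨d, hdD, hdmin⟩ : ∃ d, d ∈ D ∧ ∀ e ∈ D, d ≤ e :=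
    ⟨sInf D, Nat.sInf_mem ⟨_, hD0⟩, fun e he => Nat.sInf_le he⟩
  have hdt : d ≤ t := le_trans (hdmin _ hD0) (by omega)
  obtain ⟨hd0, k₀, l₀, hk₀, hl₀, hl₀e⟩ := hdD
  -- stepping up
  have up : ∀ a b c : Fin n, (x a).val ≠ 0 → (x b).val ≠ 0 → (b:ℕ) = (a:ℕ) + d →
      (c:ℕ) = (b:ℕ) + d → (x c).val ≠ 0 := by
    intro a b c ha hb hba hcb
    refine hx b b a hb hb ha ?_ c ?_
    · rw [max_le_iff, max_le_iff, abs_le, abs_le, abs_le]; push_cast; omega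
    · push_cast; omega
  have down : ∀ a b c : Fin n, (x a).val ≠ 0 → (x b).val ≠ 0 → (b:ℕ) = (a:ℕ) + d →
      (c:ℕ) + d = (a:ℕ) → (x c).val ≠ 0 := by
    intro a b c ha hb hba hca
    refine hx a a b ha ha hb ?_ c ?_
    · rw [max_le_iff, max_le_iff, abs_le, abs_le, abs_le]; push_cast; omega
    · push_cast; omega
  -- all elements of the class of k₀ upward
  have up_all : ∀ p : ℕ, ∀ h : (k₀:ℕ) + p*d < n, (x ⟨(k₀:ℕ) + p*d, h⟩).val ≠ 0 := by
    intro p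
    induction p using Nat.strong_induction_on with
    | _ p ih =>
      intro h
      match p, ih with
      | 0, _ =>
        have e : (⟨(k₀:ℕ) + 0*d, h⟩ : Fin n) = k₀ := by ext; simp
        rwa [e]
      | 1, _ =>
        have e : (⟨(k₀:ℕ) + 1*d, h⟩ : Fin n) = l₀ := by ext; simp; omega
        rwa [e]
      | (p+2), ih =>
        have e1 : (p+1)*d = p*d + d := by ring
        have e2 : (p+2)*d = p*d + d + d := by ring
        have h1 : (k₀:ℕ) + p*d < n := by omega
        have h2 : (k₀:ℕ) + (p+1)*d < n := by omega
        exact up ⟨(k₀:ℕ) + p*d, h1⟩ ⟨(k₀:ℕ) + (p+1)*d, h2⟩ _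
          (ih p (by omega) h1) (ih (p+1) (by omega) h2) (by simp; omega) (by simp; omega)
  have down_all : ∀ p : ℕ, ∀ _ : p*d ≤ (k₀:ℕ), (x ⟨(k₀:ℕ) - p*d, by omega⟩).val ≠ 0 := by
    intro p
    induction p using Nat.strong_induction_on with
    | _ p ih =>
      intro h
      match p, ih with
      | 0, _ =>
        have e : (⟨(k₀:ℕ) - 0*d, by omega⟩ : Fin n) = k₀ := by ext; simp
        rwa [e]
      | 1, _ =>
        exact down k₀ l₀ _ hk₀ hl₀ hl₀e (by simp; omega)
      | (p+2), ih =>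
        have e1 : (p+1)*d = p*d + d := by ring
        have e2 : (p+2)*d = p*d + d + d := by ring
        have h1 : (p+1)*d ≤ (k₀:ℕ) := by omega
        have h2 : p*d ≤ (k₀:ℕ) := by omega
        refine down ⟨(k₀:ℕ) - (p+1)*d, by omega⟩ ⟨(k₀:ℕ) - p*d, by omega⟩ _
          (ih (p+1) (by omega) h1) (ih p (by omega) h2) (by simp; omega) ?_
        simp; omega
  -- every element of the class is in the support
  have class_in : ∀ i : Fin n, (i:ℕ) % d = (k₀:ℕ) % d → (x i).val ≠ 0 := by
    intro i hi
    rcases Nat.le_total (k₀:ℕ) (i:ℕ) with hc | hc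
    · have hdvd : d ∣ (i:ℕ) - (k₀:ℕ) := (Nat.modEq_iff_dvd' hc).mp hi.symm
      obtain ⟨p, hp⟩ := hdvd
      rw [Nat.mul_comm] at hp
      have e : (i : Fin n) = ⟨(k₀:ℕ) + p*d, by omega⟩ := by ext; simp; omega
      rw [e]; exact up_all p _
    · have hdvd : d ∣ (k₀:ℕ) - (i:ℕ) := (Nat.modEq_iff_dvd' hc).mp hi
      obtain ⟨p, hp⟩ := hdvd
      rw [Nat.mul_comm] at hp
      have hpd : p*d ≤ (k₀:ℕ) := by omega
      have e : (i : Fin n) = ⟨(k₀:ℕ) - p*d, by omega⟩ := by ext; simp; omega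
      rw [e]; exact down_all p hpd
  -- every support element is in the class
  have supp_in : ∀ j : Fin n, (x j).val ≠ 0 → (j:ℕ) % d = (k₀:ℕ) % d := by
    intro j hj
    set r : ℕ := (k₀:ℕ) % d with hr
    have hrd : r < d := Nat.mod_lt _ hd0
    -- find a class element c with |j - c| < d
    obtain ⟨c, hcn, hcr, hclose2⟩ :
        ∃ c : ℕ, c < n ∧ c % d = r ∧ ((j:ℕ) < c + d ∧ c < (j:ℕ) + d) := by
      have hdm := Nat.div_add_mod (j:ℕ) d
      have hjm : (j:ℕ) % d < d := Nat.mod_lt _ hd0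
      have hjn := j.isLt
      rcases Nat.lt_or_ge ((j:ℕ) % d) r with hcase | hcase
      swap
      · exact ⟨d * ((j:ℕ)/d) + r, by omega,
          by simp [Nat.mul_add_mod, Nat.mod_eq_of_lt hrd], by omega⟩
      · rcases Nat.lt_or_ge (j:ℕ) d with hsml | hbig
        · have : (j:ℕ)/d = 0 := Nat.div_eq_of_lt hsml
          exact ⟨r, by have := k₀.isLt; omega, Nat.mod_eq_of_lt hrd, by omega⟩
        · have hq1 : 1 ≤ (j:ℕ)/d := (Nat.one_le_div_iff hd0).mpr hbig
          obtain ⟨q', hq'⟩ : ∃ q', (j:ℕ)/d = q' + 1 := ⟨(j:ℕ)/d - 1, by omega⟩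
          have hexp : d * ((j:ℕ)/d) = d * q' + d := by rw [hq']; ring
          exact ⟨d * q' + r, by omega,
            by simp [Nat.mul_add_mod, Nat.mod_eq_of_lt hrd], by omega⟩
    have hcF : (x ⟨c, hcn⟩).val ≠ 0 := class_in ⟨c, hcn⟩ (by simp [hcr, hr])
    -- if c ≠ j we get a smaller gap
    by_cases hcj : c = (j:ℕ)
    · have : j = (⟨c, hcn⟩ : Fin n) := by ext; simp [hcj]
      rw [this]; simp [hcr, hr]
    · exfalso
      rcases Nat.lt_or_ge c (j:ℕ) with hlt | hge
      · have hmem : ((j:ℕ) - c) ∈ D := ⟨by omega, ⟨c, hcn⟩, j, hcF, hj, by simp; omega⟩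
        have := hdmin _ hmem
        omega
      · have hlt' : (j:ℕ) < c := by omega
        have hmem : (c - (j:ℕ)) ∈ D := ⟨by omega, j, ⟨c, hcn⟩, hj, hcF, by simp; omega⟩
        have := hdmin _ hmem
        omega
  exact ⟨d, (k₀:ℕ) % d, hd0, hdt, Nat.mod_lt _ hd0,
    fun i => ⟨supp_in i, class_in i⟩⟩


lemma diff_card (t n : ℕ) :
    Nat.card ↥(B2t t n \ RLLset t n) ≤ (t+1)*(t+1) := by
  classical
  have spec : ∀ x : ↥(B2t t n \ RLLset t n),
      ∃ p : ℕ × ℕ, 0 < p.1 ∧ p.1 ≤ t ∧ p.2 < p.1 ∧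
        ∀ i : Fin n, (x.1 i).val ≠ 0 ↔ (i:ℕ) % p.1 = p.2 := by
    intro x
    obtain ⟨d, r, h1, h2, h3, h4⟩ := bgp_struct t n x.1 x.2.1 x.2.2
    exact ⟨⟨d, r⟩, h1, h2, h3, h4⟩
  have key : Function.Injective (fun x : ↥(B2t t n \ RLLset t n) =>
      ((⟨(spec x).choose.1, by have := (spec x).choose_spec; omega⟩ : Fin (t+1)),
       (⟨(spec x).choose.2, by have := (spec x).choose_spec; omega⟩ : Fin (t+1)))) := by
    intro x y h
    simp only [Prod.mk.injEq, Fin.mk.injEq] at h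
    obtain ⟨_, _, _, hx4⟩ := (spec x).choose_spec
    obtain ⟨_, _, _, hy4⟩ := (spec y).choose_spec
    apply Subtype.ext; funext i
    have hx := hx4 i
    have hy := hy4 i
    rw [h.1, h.2] at hx
    have v1 := (x.1 i).isLt
    have v2 := (y.1 i).isLt
    apply Fin.ext
    by_cases hc : ((i:ℕ)) % (spec y).choose.1 = (spec y).choose.2
    · have := hx.mpr hc; have := hy.mpr hc; omega
    · have := fun hh => hc (hx.mp hh); have := fun hh => hc (hy.mp hh); omega
  calc Nat.card ↥(B2t t n \ RLLset t n) ≤ Nat.card (Fin (t+1) × Fin (t+1)) :=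
        Nat.card_le_card_of_injective _ key
    _ = (t+1)*(t+1) := by simp [Nat.card_eq_fintype_card]

lemma bgp_card_le (t n : ℕ) :
    Nat.card ↥(B2t t n) ≤ Nat.card ↥(RLLset t n) + (t+1)*(t+1) := by
  have hsub : B2t t n ⊆ RLLset t n ∪ (B2t t n \ RLLset t n) := by
    intro x hx
    by_cases h : x ∈ RLLset t n
    · exact Or.inl h
    · exact Or.inr ⟨hx, h⟩
  rw [Nat.card_coe_set_eq, Nat.card_coe_set_eq]
  calc (B2t t n).ncard ≤ (RLLset t n ∪ (B2t t n \ RLLset t n)).ncard :=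
        Set.ncard_le_ncard hsub (Set.toFinite _)
    _ ≤ (RLLset t n).ncard + (B2t t n \ RLLset t n).ncard := Set.ncard_union_le _ _
    _ ≤ (RLLset t n).ncard + (t+1)*(t+1) := by
        have := diff_card t n
        rw [Nat.card_coe_set_eq] at this
        omega

lemma rll_subset_bgp' (t n : ℕ) (h : RLLset t n ⊆ B2t t n) :
    Nat.card ↥(RLLset t n) ≤ Nat.card ↥(B2t t n) := by
  rw [Nat.card_coe_set_eq, Nat.card_coe_set_eq]
  exact Set.ncard_le_ncard h (Set.toFinite _)



noncomputable def Scard (t n : ℕ) : ℕ := Nat.card ↥(RLLset t n)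
noncomputable def Bcard (t n : ℕ) : ℕ := Nat.card ↥(B2t t n)

lemma scard_pos' (t n : ℕ) : 1 ≤ Scard t n := scard_pos t n
lemma scard_small' (t n : ℕ) (h : n ≤ t) : Scard t n ≤ n + 1 := scard_small t n h
lemma scard_lower' (t m : ℕ) : Scard t (m+t) + Scard t m ≤ Scard t (m+t+1) := scard_lower t m
lemma scard_upper' (t m : ℕ) : Scard t (m+t+1) ≤ Scard t (m+t) + Scard t m := scard_upper t m
lemma bcard_lower (t n : ℕ) : Scard t n ≤ Bcard t n :=
  rll_subset_bgp' t n (rll_subset_bgp t n)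
lemma bcard_upper (t n : ℕ) : Bcard t n ≤ Scard t n + (t+1)*(t+1) := bgp_card_le t n

section analysis
variable {t : ℕ} {ρ : ℝ}

lemma s_bounds (ht : 1 ≤ t) (h1 : 1 < ρ) (hroot : ρ ^ (t+1) = ρ ^ t + 1) :
    ∀ n : ℕ, ρ ^ n ≤ ρ ^ t * (Scard t n : ℝ) ∧ (Scard t n : ℝ) ≤ (t+1) * ρ ^ n := by
  intro n
  induction n using Nat.strong_induction_on with
  | _ n ih =>
    have hρ0 : (0:ℝ) < ρ := by linarith
    have hρ1 : (1:ℝ) ≤ ρ := le_of_lt h1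
    rcases Nat.lt_or_ge n (t+1) with hsm | hbig
    · constructor
      · have e1 : ρ ^ n ≤ ρ ^ t := pow_le_pow_right₀ hρ1 (by omega)
        have e2 : (1:ℝ) ≤ (Scard t n : ℝ) := by exact_mod_cast scard_pos' t n
        nlinarith [pow_pos hρ0 t]
      · have e1 : (Scard t n : ℝ) ≤ (n+1 : ℝ) := by exact_mod_cast scard_small' t n (by omega)
        have e2 : (1:ℝ) ≤ ρ ^ n := one_le_pow₀ hρ1
        have e3 : (n+1:ℝ) ≤ (t+1:ℝ) := by
          have : (n:ℝ) ≤ (t:ℝ) := by exact_mod_cast (by omega : n ≤ t)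
          linarith
        nlinarith
    · obtain ⟨m, rfl⟩ : ∃ m, n = m + t + 1 := ⟨n - t - 1, by omega⟩
      obtain ⟨l1, u1⟩ := ih (m+t) (by omega)
      obtain ⟨l2, u2⟩ := ih m (by omega)
      have hpowsplit : ρ ^ (m+t+1) = ρ ^ (m+t) + ρ ^ m := by
        calc ρ ^ (m+t+1) = ρ ^ m * ρ ^ (t+1) := by ring
          _ = ρ ^ m * (ρ ^ t + 1) := by rw [hroot]
          _ = ρ ^ (m+t) + ρ ^ m := by ring
      constructor
      · have hrec : (Scard t (m+t) : ℝ) + (Scard t m : ℝ) ≤ (Scard t (m+t+1) : ℝ) := by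
          exact_mod_cast scard_lower' t m
        calc ρ ^ (m+t+1) = ρ ^ (m+t) + ρ ^ m := hpowsplit
          _ ≤ ρ ^ t * (Scard t (m+t) : ℝ) + ρ ^ t * (Scard t m : ℝ) := by linarith
          _ = ρ ^ t * ((Scard t (m+t) : ℝ) + (Scard t m : ℝ)) := by ring
          _ ≤ ρ ^ t * (Scard t (m+t+1) : ℝ) := by
              have := pow_pos hρ0 t; nlinarith
      · have hrec : (Scard t (m+t+1) : ℝ) ≤ (Scard t (m+t) : ℝ) + (Scard t m : ℝ) := by
          exact_mod_cast scard_upper' t m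
        calc (Scard t (m+t+1) : ℝ) ≤ (Scard t (m+t) : ℝ) + (Scard t m : ℝ) := hrec
          _ ≤ (t+1) * ρ ^ (m+t) + (t+1) * ρ ^ m := by linarith
          _ = (t+1) * (ρ ^ (m+t) + ρ ^ m) := by ring
          _ = (t+1) * ρ ^ (m+t+1) := by rw [hpowsplit]

lemma b_limit (ht : 1 ≤ t) (hmem : ρ ∈ Set.Ioo (1:ℝ) 2) (hroot : ρ ^ (t+1) - ρ ^ t - 1 = 0) :
    Filter.Tendsto (fun n : ℕ => Real.logb 2 (Bcard t n) / (n : ℝ))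
      Filter.atTop (nhds (Real.logb 2 ρ)) := by
  obtain ⟨h1, h2⟩ := hmem
  have hroot' : ρ ^ (t+1) = ρ ^ t + 1 := by linarith
  have hρ0 : (0:ℝ) < ρ := by linarith
  set L := Real.logb 2 ρ with hL
  set C : ℝ := (((t+1)*(t+1) + (t+1) : ℕ) : ℝ) with hC
  have hb2 : (1:ℝ) < 2 := one_lt_two
  -- bounds on Bcard
  have blow : ∀ n : ℕ, ρ ^ n ≤ ρ ^ t * (Bcard t n : ℝ) := by
    intro n
    have := (s_bounds ht h1 hroot' n).1
    have hmono : (Scard t n : ℝ) ≤ (Bcard t n : ℝ) := by exact_mod_cast bcard_lower t n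
    have := pow_pos hρ0 t
    nlinarith
  have bup : ∀ n : ℕ, (Bcard t n : ℝ) ≤ C * ρ ^ n := by
    intro n
    have hup := (s_bounds ht h1 hroot' n).2
    have hBS : (Bcard t n : ℝ) ≤ (Scard t n : ℝ) + ((t+1)*(t+1) : ℕ) := by
      exact_mod_cast bcard_upper t n
    have e2 : (1:ℝ) ≤ ρ ^ n := one_le_pow₀ (le_of_lt h1)
    have : ((t+1)*(t+1) : ℕ) * (1:ℝ) ≤ ((t+1)*(t+1) : ℕ) * ρ ^ n := by
      apply mul_le_mul_of_nonneg_left e2 (by positivity)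
    push_cast [hC] at hBS this ⊢
    nlinarith
  have hBpos : ∀ n : ℕ, (0:ℝ) < (Bcard t n : ℝ) := by
    intro n
    have : (1:ℕ) ≤ Bcard t n := le_trans (scard_pos' t n) (bcard_lower t n)
    exact_mod_cast this
  -- squeeze
  have lower_bd : ∀ n : ℕ, 1 ≤ n → L - (t * L) / n ≤ Real.logb 2 (Bcard t n) / n := by
    intro n hn
    have hn0 : (0:ℝ) < (n:ℝ) := by exact_mod_cast hn
    have harg : (0:ℝ) < ρ ^ n / ρ ^ t := by positivity
    have hle : ρ ^ n / ρ ^ t ≤ (Bcard t n : ℝ) := by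
      rw [div_le_iff₀ (by positivity)]
      have := blow n; nlinarith [pow_pos hρ0 t, hBpos n]
    have hlog : (n:ℝ) * L - t * L ≤ Real.logb 2 (Bcard t n) := by
      have := Real.logb_le_logb_of_le hb2 harg hle
      rwa [Real.logb_div (by positivity) (by positivity),
        Real.logb_pow, Real.logb_pow] at this
    have hdiv := (div_le_div_iff_of_pos_right hn0).mpr hlog
    have e : ((n:ℝ) * L - t * L) / n = L - (t * L) / n := by
      field_simp
    rwa [e] at hdiv
  have hCpos : (0:ℝ) < C := by
    rw [hC]; push_cast; positivity
  have upper_bd : ∀ n : ℕ, 1 ≤ n →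
      Real.logb 2 (Bcard t n) / n ≤ Real.logb 2 C / n + L := by
    intro n hn
    have hn0 : (0:ℝ) < (n:ℝ) := by exact_mod_cast hn
    have hlog : Real.logb 2 (Bcard t n) ≤ Real.logb 2 C + (n:ℝ) * L := by
      have := Real.logb_le_logb_of_le hb2 (hBpos n) (bup n)
      rwa [Real.logb_mul (ne_of_gt hCpos) (by positivity), Real.logb_pow] at this
    have hdiv := (div_le_div_iff_of_pos_right hn0).mpr hlog
    have e : (Real.logb 2 C + (n:ℝ) * L) / n = Real.logb 2 C / n + L := by
      field_simp
    rwa [e] at hdiv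
  -- limits of the bounding sequences
  have hlow : Filter.Tendsto (fun n : ℕ => L - (t * L) / n) Filter.atTop (nhds L) := by
    have h0 : Filter.Tendsto (fun n : ℕ => (t * L) / n) Filter.atTop (nhds 0) :=
      tendsto_const_div_atTop_nhds_zero_nat _
    simpa using Filter.Tendsto.sub (tendsto_const_nhds) h0
  have hup : Filter.Tendsto (fun n : ℕ => Real.logb 2 C / n + L) Filter.atTop (nhds L) := by
    have h0 : Filter.Tendsto (fun n : ℕ => Real.logb 2 C / n) Filter.atTop (nhds 0) :=
      tendsto_const_div_atTop_nhds_zero_nat _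
    simpa using Filter.Tendsto.add h0 (tendsto_const_nhds)
  refine tendsto_of_tendsto_of_tendsto_of_le_of_le' hlow hup ?_ ?_
  · filter_upwards [Filter.eventually_ge_atTop 1] with n hn
    exact lower_bd n hn
  · filter_upwards [Filter.eventually_ge_atTop 1] with n hn
    exact upper_bd n hn
end analysis


lemma root_exu (t : ℕ) (ht : 1 ≤ t) :
    ∃! ρ : ℝ, ρ ∈ Set.Ioo (1 : ℝ) 2 ∧ ρ ^ (t + 1) - ρ ^ t - 1 = 0 := by
  have hmono : ∀ x y : ℝ, 1 ≤ x → x < y →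
      x ^ (t+1) - x ^ t - 1 < y ^ (t+1) - y ^ t - 1 := by
    intro x y hx hxy
    have hx0 : (0:ℝ) ≤ x := by linarith
    have e : ∀ z : ℝ, z ^ (t+1) - z ^ t - 1 = z ^ t * (z - 1) - 1 := by
      intro z; ring
    rw [e, e]
    have h1 : x ^ t * (x - 1) < x ^ t * (y - 1) := by
      have : (0:ℝ) < x ^ t := pow_pos (by linarith) t
      nlinarith
    have h2 : x ^ t * (y - 1) ≤ y ^ t * (y - 1) := by
      have : x ^ t ≤ y ^ t := pow_le_pow_left₀ hx0 (le_of_lt hxy) t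
      nlinarith
    linarith
  -- existence via IVT
  have hcont : ContinuousOn (fun x : ℝ => x ^ (t+1) - x ^ t - 1) (Set.Icc 1 2) := by
    fun_prop
  have hf1 : (fun x : ℝ => x ^ (t+1) - x ^ t - 1) 1 = -1 := by simp
  have hf2 : (0:ℝ) < (fun x : ℝ => x ^ (t+1) - x ^ t - 1) 2 := by
    simp only
    have h2t : (2:ℝ) ^ (t+1) = 2 * 2 ^ t := by ring
    have : (1:ℝ) < 2 ^ t := by
      calc (1:ℝ) < 2 := one_lt_two
        _ ≤ 2 ^ t := le_self_pow₀ (by norm_num) (by omega)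
    rw [h2t]; linarith
  have hsub := intermediate_value_Ioo (by norm_num : (1:ℝ) ≤ 2) hcont
  have h0mem : (0:ℝ) ∈ Set.Ioo ((fun x : ℝ => x ^ (t+1) - x ^ t - 1) 1)
      ((fun x : ℝ => x ^ (t+1) - x ^ t - 1) 2) := by
    constructor
    · rw [hf1]; norm_num
    · exact hf2
  obtain ⟨ρ, hρmem, hρval⟩ := hsub h0mem
  simp only at hρval
  refine ⟨ρ, ⟨hρmem, hρval⟩, ?_⟩
  rintro ρ' ⟨hmem', hval'⟩
  rcases lt_trichotomy ρ' ρ with hc | hc | hc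
  · have := hmono ρ' ρ (le_of_lt hmem'.1) hc
    rw [hval', hρval] at this; exact absurd this (lt_irrefl 0)
  · exact hc
  · have := hmono ρ ρ' (le_of_lt hρmem.1) hc
    rw [hval', hρval] at this; exact absurd this (lt_irrefl 0)


/-- **Corollary 6.** For every `t ≥ 1`, the polynomial `z^{t+1} - z^t - 1` has a
unique real root `ρ_t` in the open interval `(1, 2)`, and the capacity of the
BGP(t) constraint equals `log₂ ρ_t`:
`(log₂|B_{2;t}(n)|)/n → log₂ ρ_t` as `n → ∞`. -/
theorem bgp_t_capacity (t : ℕ) (ht : 1 ≤ t) :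
    (∃! ρ : ℝ, ρ ∈ Set.Ioo (1 : ℝ) 2 ∧ ρ ^ (t + 1) - ρ ^ t - 1 = 0) ∧
    ∀ ρ : ℝ, ρ ∈ Set.Ioo (1 : ℝ) 2 → ρ ^ (t + 1) - ρ ^ t - 1 = 0 →
      Filter.Tendsto (fun n : ℕ => Real.logb 2 (Nat.card ↥(B2t t n)) / (n : ℝ))
        Filter.atTop (nhds (Real.logb 2 ρ)) := by
  refine ⟨root_exu t ht, ?_⟩
  intro ρ hmem hroot
  have := b_limit ht hmem hroot
  simpa [Bcard] using this
end

section
/- Let j ≥ 1 be an integer with j ≠ 3 and j ≠ 5, and let x = (x_1,…,x_j) = ψ(1^j) be the sign pattern defined in the context. Then for all k, l, m ∈ [j] with x_k = x_l = x_m and max{|k−l|,|l−m|,|m−k|} ≤ 2, one has k+l−m ∈ [j]. (Lemma 10) -/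
/-- The sign pattern `ψ(1^j)` of length `j`, with positions 0-indexed
(position `i` here is the paper's position `i + 1`): `ψ(1^1) = (+)`,
`ψ(1^2) = (+,-)`, `ψ(1^3) = (+,-,+)`, `ψ(1^4) = (+,-,-,+)`,
`ψ(1^5) = (+,-,+,+,-)`, `ψ(1^6) = (+,-,-,+,+,-)`, and for `j ≥ 7`
`ψ(1^j) = (+,-,-, +,…,+ ,-,-,+)` with `j - 6` pluses in the middle; equivalently,
the `-1` entries are at 0-indexed positions `1, 2, j-3, j-2` when `j ≥ 7`. -/
def psiSign (j i : ℕ) : ℤ :=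
  if (j = 2 ∧ i = 1) ∨ (j = 3 ∧ i = 1) ∨ (j = 4 ∧ (i = 1 ∨ i = 2)) ∨
     (j = 5 ∧ (i = 1 ∨ i = 4)) ∨ (j = 6 ∧ (i = 1 ∨ i = 2 ∨ i = 5)) ∨
     (7 ≤ j ∧ (i = 1 ∨ i = 2 ∨ i = j - 3 ∨ i = j - 2))
  then -1 else 1

/-- **Lemma 10.** Let `j ≥ 1` with `j ≠ 3` and `j ≠ 5`, and let
`x = ψ(1^j)`. Then for all positions `k, l, m` of `x` with `x k = x l = x m` and
`max {|k-l|, |l-m|, |m-k|} ≤ 2`, the integer `k + l - m` is again a valid position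
of `x` (i.e. lies in `[0, j)` in 0-indexed terms, `[j]` in the paper's). -/
theorem psi_closed_under_triples (j : ℕ) (hj : 1 ≤ j) (hj3 : j ≠ 3) (hj5 : j ≠ 5)
    (k l m : Fin j)
    (hkl : psiSign j k = psiSign j l) (hlm : psiSign j l = psiSign j m)
    (hd : max (max |((k : ℕ) : ℤ) - ((l : ℕ) : ℤ)| |((l : ℕ) : ℤ) - ((m : ℕ) : ℤ)|)
              |((m : ℕ) : ℤ) - ((k : ℕ) : ℤ)| ≤ 2) :
    0 ≤ ((k : ℕ) : ℤ) + ((l : ℕ) : ℤ) - ((m : ℕ) : ℤ) ∧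
    ((k : ℕ) : ℤ) + ((l : ℕ) : ℤ) - ((m : ℕ) : ℤ) < (j : ℤ) := by
  have key : ∀ a b : ℕ, psiSign j a = psiSign j b →
      (((j = 2 ∧ a = 1) ∨ (j = 3 ∧ a = 1) ∨ (j = 4 ∧ (a = 1 ∨ a = 2)) ∨
        (j = 5 ∧ (a = 1 ∨ a = 4)) ∨ (j = 6 ∧ (a = 1 ∨ a = 2 ∨ a = 5)) ∨
        (7 ≤ j ∧ (a = 1 ∨ a = 2 ∨ a = j - 3 ∨ a = j - 2))) ↔
       ((j = 2 ∧ b = 1) ∨ (j = 3 ∧ b = 1) ∨ (j = 4 ∧ (b = 1 ∨ b = 2)) ∨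
        (j = 5 ∧ (b = 1 ∨ b = 4)) ∨ (j = 6 ∧ (b = 1 ∨ b = 2 ∨ b = 5)) ∨
        (7 ≤ j ∧ (b = 1 ∨ b = 2 ∨ b = j - 3 ∨ b = j - 2)))) := by
    intro a b h
    unfold psiSign at h
    split_ifs at h with h1 h2 h2 <;>
      first
        | exact iff_of_true h1 h2
        | exact iff_of_false h1 h2
        | exact absurd h (by norm_num)
  have h1 := key _ _ hkl
  have h2 := key _ _ hlm
  have hk := k.isLt
  have hl := l.isLt
  have hm := m.isLt
  simp only [max_le_iff, abs_le] at hd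
  rcases le_or_gt j 6 with h7 | h7
  · interval_cases j <;> norm_num at h1 h2 <;> omega
  · have hn2 : j ≠ 2 := by omega
    have hn3 : j ≠ 3 := by omega
    have hn4 : j ≠ 4 := by omega
    have hn5 : j ≠ 5 := by omega
    have hn6 : j ≠ 6 := by omega
    have h7' : 7 ≤ j := h7
    simp only [hn2, hn3, hn4, hn5, hn6, h7', false_and, false_or, true_and] at h1 h2
    omega
end

section
/- Fix t ≥ 1. A bi-infinite ternary sequence x = {x_j}_{j∈ℤ} over A_3 = {-1,0,1} satisfies the TGP(t) constraint if and only if for every j ∈ ℤ its window (x_{j−t}, …, x_{j+2t}) of length 3t+1 satisfies the local condition: for all k, l, m ∈ [j, j+t] with x_k = x_l = x_m and x_k ≠ 0, one has x_{k+l−m} ≠ 0. (Content of Theorem 13: the set T*_{3;t} of bi-infinite TGP(t)-constrained sequences equals the sofic shift of the graph G_{3;t} whose vertices are exactly the windows satisfying this local condition.) -/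
/-- A bi-infinite ternary sequence `x : ℤ → ℤ` (entries in `{-1, 0, 1}`) satisfies
the TGP(t) constraint: for all `k, l, m ∈ ℤ` with
`max {|k-l|, |l-m|, |m-k|} ≤ t` such that `x k, x l, x m` are equal and nonzero,
`x (k + l - m)` is also nonzero. -/
def SatisfiesTGPtBiInf (t : ℕ) (x : ℤ → ℤ) : Prop :=
  ∀ k l m : ℤ, x k ≠ 0 → x k = x l → x l = x m →
    max (max |k - l| |l - m|) |m - k| ≤ (t : ℤ) →
    x (k + l - m) ≠ 0

/-- **Content of Theorem 13.** Fix `t ≥ 1`. A bi-infinite ternary sequence `x`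
satisfies the TGP(t) constraint if and only if for every `j ∈ ℤ` its window
`(x_{j-t}, …, x_{j+2t})` satisfies the local condition: for all
`k, l, m ∈ [j, j+t]` with `x k = x l = x m` and `x k ≠ 0`, one has
`x (k + l - m) ≠ 0` (note `k + l - m ∈ [j-t, j+2t]` automatically). -/
theorem tgp_biinfinite_iff_local (t : ℕ) (ht : 1 ≤ t) (x : ℤ → ℤ)
    (hx : ∀ i : ℤ, x i = -1 ∨ x i = 0 ∨ x i = 1) :
    SatisfiesTGPtBiInf t x ↔
      ∀ j k l m : ℤ, j ≤ k → k ≤ j + t → j ≤ l → l ≤ j + t → j ≤ m → m ≤ j + t →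
        x k ≠ 0 → x k = x l → x l = x m → x (k + l - m) ≠ 0 := by
  constructor
  · intro h j k l m hjk hkj hjl hlj hjm hmj h1 h2 h3
    apply h k l m h1 h2 h3
    simp only [max_le_iff, abs_le]
    omega
  · intro h k l m h1 h2 h3 hmax
    simp only [max_le_iff, abs_le] at hmax
    exact h (min k (min l m)) k l m (by omega) (by omega) (by omega) (by omega)
      (by omega) (by omega) h1 h2 h3
end
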